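/- arXiv:1310.3195 — 4 statements merged into one kernel-verified Lean document; each statement's English description precedes it below -/
import Mathlib

section
/- For every finite alphabet A ⊆ Λ and every language L ⊆ A* definable by a first-order sentence over words, the syntactic monoid M_L of L is aperiodic, i.e., there exists k ≥ 1 such that u^{k+1} = u^k for every u ∈ M_L (equivalently, the identity a^π a = a^π holds in M_L). -/
set_option autoImplicit false

instance instCountableLex {α : Type*} [Countable α] : Countable (Lex α) :=
  inferInstanceAs (Countable α)

namespace EFGames

/-! ### Syntax of first-order logic over words.
Letters of the alphabet `Λ` and first-order variables are represented by natural numbers. -/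

inductive FOForm : Type where
  | top | bot | empt
  | eq (x y : ℕ) | lab (x a : ℕ)
  | lt (x y : ℕ) | le (x y : ℕ) | suc (x y : ℕ)
  | fmin (x : ℕ) | fmax (x : ℕ)
  | not (φ : FOForm) | or (φ ψ : FOForm) | and (φ ψ : FOForm)
  | ex (x : ℕ) (φ : FOForm) | all (x : ℕ) (φ : FOForm)

/-- Free variables of a formula. -/
def FOForm.FV : FOForm → Finset ℕ
  | .top | .bot | .empt => ∅
  | .eq x y | .lt x y | .le x y | .suc x y => {x, y}
  | .lab x _ | .fmin x | .fmax x => {x}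
  | .not φ => φ.FV
  | .or φ ψ | .and φ ψ => φ.FV ∪ ψ.FV
  | .ex x φ | .all x φ => φ.FV.erase x

/-- Quantifier depth. -/
def FOForm.qd : FOForm → ℕ
  | .not φ => φ.qd
  | .or φ ψ | .and φ ψ => max φ.qd ψ.qd
  | .ex _ φ | .all _ φ => φ.qd + 1
  | _ => 0

/-- All variables occurring in a formula (free or bound). -/
def FOForm.vars : FOForm → Finset ℕ
  | .top | .bot | .empt => ∅
  | .eq x y | .lt x y | .le x y | .suc x y => {x, y}
  | .lab x _ | .fmin x | .fmax x => {x}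
  | .not φ => φ.vars
  | .or φ ψ | .and φ ψ => φ.vars ∪ ψ.vars
  | .ex x φ | .all x φ => insert x φ.vars

/-- The formula contains none of the predicates `suc`, `min`, `max`, `empty`. -/
def FOForm.NoSMME : FOForm → Prop
  | .empt | .suc _ _ | .fmin _ | .fmax _ => False
  | .not φ => φ.NoSMME
  | .or φ ψ | .and φ ψ => φ.NoSMME ∧ ψ.NoSMME
  | .ex _ φ | .all _ φ => φ.NoSMME
  | _ => True

/-- The formula contains the predicate `≤` or `<`. -/
def FOForm.HasOrder : FOForm → Prop
  | .lt _ _ | .le _ _ => True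
  | .not φ => φ.HasOrder
  | .or φ ψ | .and φ ψ => φ.HasOrder ∨ ψ.HasOrder
  | .ex _ φ | .all _ φ => φ.HasOrder
  | _ => False

/-- The formula contains one of the predicates `suc`, `min`, `max`, `empty`. -/
def FOForm.HasSMME : FOForm → Prop
  | .empt | .suc _ _ | .fmin _ | .fmax _ => True
  | .not φ => φ.HasSMME
  | .or φ ψ | .and φ ψ => φ.HasSMME ∨ ψ.HasSMME
  | .ex _ φ | .all _ φ => φ.HasSMME
  | _ => False

def FOForm.IsAtomic : FOForm → Prop
  | .top | .bot | .empt | .eq _ _ | .lab _ _ | .lt _ _ | .le _ _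
  | .suc _ _ | .fmin _ | .fmax _ => True
  | _ => False

/-- A literal is an atomic formula or a negated atomic formula. -/
def FOForm.IsLiteral (φ : FOForm) : Prop :=
  φ.IsAtomic ∨ ∃ ψ : FOForm, ψ.IsAtomic ∧ φ = .not ψ

/-- A sentence is a formula without free variables. -/
def FOForm.IsSentence (φ : FOForm) : Prop := φ.FV = ∅

/-- Contexts: formulas with exactly one occurrence of a placeholder `∘`. -/
inductive FOCtx : Type where
  | hole
  | notC (μ : FOCtx)
  | orL (μ : FOCtx) (ψ : FOForm)
  | orR (φ : FOForm) (μ : FOCtx)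
  | andL (μ : FOCtx) (ψ : FOForm)
  | andR (φ : FOForm) (μ : FOCtx)
  | exC (x : ℕ) (μ : FOCtx)
  | allC (x : ℕ) (μ : FOCtx)

/-- Substituting a formula for the placeholder of a context. -/
def FOCtx.subst : FOCtx → FOForm → FOForm
  | .hole, φ => φ
  | .notC μ, φ => .not (μ.subst φ)
  | .orL μ ψ, φ => .or (μ.subst φ) ψ
  | .orR χ μ, φ => .or χ (μ.subst φ)
  | .andL μ ψ, φ => .and (μ.subst φ) ψ
  | .andR χ μ, φ => .and χ (μ.subst φ)
  | .exC x μ, φ => .ex x (μ.subst φ)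
  | .allC x μ, φ => .all x (μ.subst φ)

/-- A fragment: a nonempty set of formulas satisfying the syntactic closure properties. -/
structure IsFragment (F : Set FOForm) : Prop where
  nonempty : F.Nonempty
  top_mem : ∀ (μ : FOCtx) (φ : FOForm), μ.subst φ ∈ F → μ.subst .top ∈ F
  bot_mem : ∀ (μ : FOCtx) (φ : FOForm), μ.subst φ ∈ F → μ.subst .bot ∈ F
  lab_mem : ∀ (μ : FOCtx) (φ : FOForm) (x a : ℕ), μ.subst φ ∈ F → μ.subst (.lab x a) ∈ F
  or_mem : ∀ (μ : FOCtx) (φ ψ : FOForm),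
    μ.subst (.or φ ψ) ∈ F ↔ μ.subst φ ∈ F ∧ μ.subst ψ ∈ F
  and_mem : ∀ (μ : FOCtx) (φ ψ : FOForm),
    μ.subst (.and φ ψ) ∈ F ↔ μ.subst φ ∈ F ∧ μ.subst ψ ∈ F
  negneg : ∀ (μ : FOCtx) (φ : FOForm), μ.subst (.not (.not φ)) ∈ F → μ.subst φ ∈ F
  ex_drop : ∀ (μ : FOCtx) (φ : FOForm) (x : ℕ),
    μ.subst (.ex x φ) ∈ F → x ∉ φ.FV → μ.subst φ ∈ F
  all_drop : ∀ (μ : FOCtx) (φ : FOForm) (x : ℕ),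
    μ.subst (.all x φ) ∈ F → x ∉ φ.FV → μ.subst φ ∈ F

/-- A fragment is order-stable if `μ(x<y) ∈ F ↔ μ(x≤y) ∈ F`. -/
def OrderStable (F : Set FOForm) : Prop :=
  ∀ (μ : FOCtx) (x y : ℕ), μ.subst (.lt x y) ∈ F ↔ μ.subst (.le x y) ∈ F

/-- A fragment is suc-stable if it satisfies the two closure conditions for `suc`, `min`, `max`, `empty`. -/
def SucStable (F : Set FOForm) : Prop :=
  (∀ (μ : FOCtx) (x y : ℕ), μ.subst (.suc x y) ∈ F →
      μ.subst (.eq x y) ∈ F ∧ μ.subst (.fmax x) ∈ F ∧ μ.subst (.fmin y) ∈ F) ∧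
  (∀ (μ : FOCtx) (x : ℕ), (μ.subst (.fmin x) ∈ F ∨ μ.subst (.fmax x) ∈ F) →
      μ.subst .empt ∈ F)

/-- The fragment has quantifier depth bounded by `n`. -/
def QDBoundedBy (F : Set FOForm) (n : ℕ) : Prop := ∀ φ ∈ F, φ.qd ≤ n

/-- Quantifiers, including the negated quantifiers. -/
inductive Quant : Type | qex | qall | qnex | qnall

def Quant.apply : Quant → ℕ → FOForm → FOForm
  | .qex, x, φ => .ex x φ
  | .qall, x, φ => .all x φ
  | .qnex, x, φ => .not (.ex x φ)
  | .qnall, x, φ => .not (.all x φ)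

/-- The reduct `Qx⁻¹F` of a set of formulas. -/
def reduct (Q : Quant) (x : ℕ) (F : Set FOForm) : Set FOForm := {φ | Q.apply x φ ∈ F}
/-! ### Generalized words -/

/-- A (countable) generalized word over the alphabet `ℕ`: a countable linear order
labeled by letters. Words are compared up to label-preserving order isomorphism
(`GWord.Iso`). -/
structure GWord : Type 1 where
  carrier : Type
  ord : LinearOrder carrier
  cnt : Countable carrier
  label : carrier → ℕ

attribute [instance] GWord.ord GWord.cnt

/-- Label-preserving order isomorphism of generalized words. -/
def GWord.Iso (u v : GWord) : Prop :=
  ∃ f : u.carrier ≃o v.carrier, ∀ p : u.carrier, v.label (f p) = u.label p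

/-- Satisfaction of a formula in a word under a (partial) valuation of the variables. -/
def GWord.Sat (u : GWord) : (ℕ → Option u.carrier) → FOForm → Prop
  | _, .top => True
  | _, .bot => False
  | _, .empt => IsEmpty u.carrier
  | α, .eq x y => ∃ p q : u.carrier, α x = some p ∧ α y = some q ∧ p = q
  | α, .lab x a => ∃ p : u.carrier, α x = some p ∧ u.label p = a
  | α, .lt x y => ∃ p q : u.carrier, α x = some p ∧ α y = some q ∧ p < q
  | α, .le x y => ∃ p q : u.carrier, α x = some p ∧ α y = some q ∧ p ≤ q
  | α, .suc x y => ∃ p q : u.carrier, α x = some p ∧ α y = some q ∧ p < q ∧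
      ∀ r : u.carrier, ¬ (p < r ∧ r < q)
  | α, .fmin x => ∃ p : u.carrier, α x = some p ∧ ∀ q : u.carrier, p ≤ q
  | α, .fmax x => ∃ p : u.carrier, α x = some p ∧ ∀ q : u.carrier, q ≤ p
  | α, .not φ => ¬ u.Sat α φ
  | α, .or φ ψ => u.Sat α φ ∨ u.Sat α ψ
  | α, .and φ ψ => u.Sat α φ ∧ u.Sat α ψ
  | α, .ex x φ => ∃ p : u.carrier, u.Sat (fun y => if y = x then some p else α y) φ
  | α, .all x φ => ∀ p : u.carrier, u.Sat (fun y => if y = x then some p else α y) φ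

/-- The empty valuation. -/
def emptyVal (u : GWord) : ℕ → Option u.carrier := fun _ => none

/-- A word satisfies a sentence. -/
def SatS (u : GWord) (φ : FOForm) : Prop := u.Sat (emptyVal u) φ

/-- Updating a valuation at a variable. -/
def updVal {u : GWord} (α : ℕ → Option u.carrier) (x : ℕ) (p : u.carrier) :
    ℕ → Option u.carrier :=
  fun y => if y = x then some p else α y

/-- The domain of the valuation `α` is exactly the finite set `V`. -/
def ValDom {u : GWord} (α : ℕ → Option u.carrier) (V : Finset ℕ) : Prop :=
  ∀ x : ℕ, (α x).isSome ↔ x ∈ V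

/-- A finite word, regarded as a generalized word. -/
def listToGWord (w : List ℕ) : GWord :=
  ⟨Fin w.length, inferInstance, inferInstance, w.get⟩

/-- Concatenation of generalized words. -/
def GWord.concat (u v : GWord) : GWord :=
  ⟨u.carrier ⊕ₗ v.carrier, inferInstance, inferInstance,
    fun p => Sum.elim u.label v.label (ofLex p)⟩

/-- The `τ`-power of a word, where `τ` is the order type of the countable linear order `T`:
positions are pairs `(t, p)` ordered with the `T`-component dominant. -/
def GWord.pow (u : GWord) (T : Type) [LinearOrder T] [Countable T] : GWord :=
  ⟨T ×ₗ u.carrier, inferInstance, inferInstance, fun p => u.label (ofLex p).2⟩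

/-- An index type of order type `ρ = ω + ζ·η + ω*`: a copy of `ℕ`, followed by `ℤ × ℚ`
ordered lexicographically with the `ℚ`-component dominant, followed by the negative
integers (the order dual of `ℕ`). -/
abbrev Rho : Type := (ℕ ⊕ₗ (ℚ ×ₗ ℤ)) ⊕ₗ ℕᵒᵈ

/-- ρ-rational words: built from finite words by concatenation and ρ-power
(closed under isomorphism, since words are identified up to isomorphism). -/
inductive RhoRational : GWord → Prop where
  | fin (w : List ℕ) : RhoRational (listToGWord w)
  | concat {u v : GWord} : RhoRational u → RhoRational v → RhoRational (u.concat v)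
  | rpow {u : GWord} : RhoRational u → RhoRational (u.pow Rho)
  | iso {u v : GWord} : RhoRational u → GWord.Iso u v → RhoRational v
/-! ### The `F`-game -/

/-- A configuration of the `F`-game: a set of formulas (an iterated reduct of the
original fragment) together with two valuations on two words. -/
structure Config : Type 1 where
  frag : Set FOForm
  w1 : GWord
  w2 : GWord
  val1 : ℕ → Option w1.carrier
  val2 : ℕ → Option w2.carrier

/-- Spoiler's winning condition: the configuration contains a literal with free variables
inside the valuation domain, satisfied in the first valuation but not in the second. -/
def SpoilerWinsNow (C : Config) : Prop :=
  ∃ φ ∈ C.frag, φ.IsLiteral ∧ (∀ y ∈ φ.FV, (C.val1 y).isSome) ∧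
    C.w1.Sat C.val1 φ ∧ ¬ C.w2.Sat C.val2 φ

/-- A set of configurations is a (Duplicator-)safe invariant: no configuration in it is
immediately winning for Spoiler, and for every move of Spoiler (a quantifier `Q`, a
variable `x` with nonempty reduct, and a quest `q` in the appropriate word) Duplicator
has a reply `r` leading back into the set (the valuations are swapped for negated
quantifiers). -/
def SafeInv (Good : Set Config) : Prop :=
  ∀ D ∈ Good,
    (¬ SpoilerWinsNow D) ∧
    (∀ x : ℕ, (reduct .qex x D.frag).Nonempty →
      ∀ q : D.w1.carrier, ∃ r : D.w2.carrier,
        (⟨reduct .qex x D.frag, D.w1, D.w2, updVal D.val1 x q, updVal D.val2 x r⟩ : Config) ∈ Good) ∧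
    (∀ x : ℕ, (reduct .qall x D.frag).Nonempty →
      ∀ q : D.w2.carrier, ∃ r : D.w1.carrier,
        (⟨reduct .qall x D.frag, D.w1, D.w2, updVal D.val1 x r, updVal D.val2 x q⟩ : Config) ∈ Good) ∧
    (∀ x : ℕ, (reduct .qnex x D.frag).Nonempty →
      ∀ q : D.w2.carrier, ∃ r : D.w1.carrier,
        (⟨reduct .qnex x D.frag, D.w2, D.w1, updVal D.val2 x q, updVal D.val1 x r⟩ : Config) ∈ Good) ∧
    (∀ x : ℕ, (reduct .qnall x D.frag).Nonempty →
      ∀ q : D.w1.carrier, ∃ r : D.w2.carrier,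
        (⟨reduct .qnall x D.frag, D.w2, D.w1, updVal D.val2 x r, updVal D.val1 x q⟩ : Config) ∈ Good)

/-- Duplicator has a winning strategy from a configuration of this (possibly infinite)
safety game iff some safe invariant contains the configuration. -/
def DuplicatorWins (C : Config) : Prop :=
  ∃ Good : Set Config, C ∈ Good ∧ SafeInv Good

/-- Duplicator has a winning strategy in the `F`-game on `(u, v)` (from the initial
configuration with empty valuations). -/
def DuplicatorWinsGame (F : Set FOForm) (u v : GWord) : Prop :=
  DuplicatorWins ⟨F, u, v, fun _ => none, fun _ => none⟩

/-- Spoiler has a winning strategy: either the current configuration is already winning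
for Spoiler, or Spoiler has a move such that every reply of Duplicator (in particular,
no possible reply) leads to a configuration where Spoiler wins. -/
inductive SpoilerWins : Config → Prop where
  | now {C : Config} : SpoilerWinsNow C → SpoilerWins C
  | mex {C : Config} (x : ℕ) (h : (reduct .qex x C.frag).Nonempty) (q : C.w1.carrier)
      (h2 : ∀ r : C.w2.carrier, SpoilerWins
        ⟨reduct .qex x C.frag, C.w1, C.w2, updVal C.val1 x q, updVal C.val2 x r⟩) :
      SpoilerWins C

/-! ### π-terms and their interpretations -/

/-- π-terms over the alphabet `ℕ` (elements of the free π-algebra). -/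
inductive PiTerm : Type where
  | letter (a : ℕ)
  | mul (s t : PiTerm)
  | pi (s : PiTerm)

/-- The interpretation `⟦·⟧_ρ` of π-terms as generalized words: letters become
single-position words, products concatenations, and the π-power the ρ-power. -/
def PiTerm.evalRho : PiTerm → GWord
  | .letter a => listToGWord [a]
  | .mul s t => s.evalRho.concat t.evalRho
  | .pi s => s.evalRho.pow Rho

/-- The interpretation `⟦·⟧_m` of π-terms as finite words: the π-power becomes
the `m`-fold concatenation power. -/
def PiTerm.evalFin (m : ℕ) : PiTerm → GWord
  | .letter a => listToGWord [a]
  | .mul s t => (s.evalFin m).concat (t.evalFin m)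
  | .pi s => (s.evalFin m).pow (Fin m)

/-- `mpow u k = u^(k+1)`: positive powers in any semigroup (or magma). -/
def mpow {M : Type} [Mul M] (u : M) : ℕ → M
  | 0 => u
  | k+1 => mpow u k * u

/-- `k+1` is an idempotency exponent of `M`: `u^(k+1)` is idempotent for every `u`. -/
def IsIdemExpnt (M : Type) [Mul M] (k : ℕ) : Prop :=
  ∀ u : M, mpow u k * mpow u k = mpow u k

/-- Evaluation of a π-term in `M` under a letter assignment `h`, interpreting the
π-power as the `(k+1)`-st power. -/
def PiTerm.evalMul {M : Type} [Mul M] (h : ℕ → M) (k : ℕ) : PiTerm → M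
  | .letter a => h a
  | .mul s t => (s.evalMul h k) * (t.evalMul h k)
  | .pi s => mpow (s.evalMul h k) k

/-- The identity `s = t` of π-terms holds in `M`: for every assignment of the letters and
every idempotency exponent (i.e. interpreting `(·)^π` as the idempotent power), the two
terms evaluate equally. -/
def PiIdentityHolds (M : Type) [Mul M] (s t : PiTerm) : Prop :=
  ∀ (h : ℕ → M) (k : ℕ), IsIdemExpnt M k → s.evalMul h k = t.evalMul h k

/-! ### Languages, definability and syntactic monoids/semigroups -/

/-- All letters of the finite word `w` belong to the alphabet `A`. -/
def InAlph (A : Finset ℕ) (w : FreeMonoid ℕ) : Prop :=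
  ∀ a ∈ FreeMonoid.toList w, a ∈ A

/-- A finite word, regarded as a generalized word. -/
def wordToGWord (w : FreeMonoid ℕ) : GWord := listToGWord (FreeMonoid.toList w)

/-- The submonoid `A* ⊆ Λ*` of words over the finite alphabet `A`. -/
def wordsOver (A : Finset ℕ) : Submonoid (FreeMonoid ℕ) where
  carrier := {w | InAlph A w}
  mul_mem' := by
    intro u v hu hv a ha
    rw [FreeMonoid.toList_mul] at ha
    rcases List.mem_append.mp ha with h | h
    exacts [hu a h, hv a h]
  one_mem' := by
    intro a ha
    simp [FreeMonoid.toList_one] at ha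

/-- The single-letter word `a ∈ A*`. -/
def letterWord (A : Finset ℕ) (a : ℕ) (ha : a ∈ A) : ↥(wordsOver A) :=
  ⟨FreeMonoid.of a, by
    intro b hb
    rw [FreeMonoid.toList_of] at hb
    rcases List.mem_singleton.mp hb with rfl
    exact ha⟩

/-- The language over `A` defined by the sentence `φ`. -/
def LangOf (A : Finset ℕ) (φ : FOForm) : Set (FreeMonoid ℕ) :=
  {w | InAlph A w ∧ SatS (wordToGWord w) φ}

/-- `L ⊆ A*` is definable in `F` over the alphabet `A`. -/
def DefinableIn (F : Set FOForm) (A : Finset ℕ) (L : Set (FreeMonoid ℕ)) : Prop :=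
  ∃ φ ∈ F, φ.IsSentence ∧ L = LangOf A φ

/-- The syntactic congruence of `L` on `A*`: `u ≡_L v` iff `xuy ∈ L ⇔ xvy ∈ L` for all
contexts `x, y ∈ A*`. -/
def synCon (A : Finset ℕ) (L : Set (FreeMonoid ℕ)) : Con ↥(wordsOver A) where
  r u v := ∀ x y : FreeMonoid ℕ, InAlph A x → InAlph A y →
    ((x * ↑u * y ∈ L) ↔ (x * ↑v * y ∈ L))
  iseqv := ⟨fun _ _ _ _ _ => Iff.rfl,
    fun h x y hx hy => (h x y hx hy).symm,
    fun h1 h2 x y hx hy => (h1 x y hx hy).trans (h2 x y hx hy)⟩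
  mul' := by
    intro w x y z h1 h2 a b ha hb
    have hyb : InAlph A ((y : FreeMonoid ℕ) * b) := by
      intro c hc
      rw [FreeMonoid.toList_mul] at hc
      rcases List.mem_append.mp hc with h | h
      exacts [y.2 c h, hb c h]
    have hax : InAlph A (a * (x : FreeMonoid ℕ)) := by
      intro c hc
      rw [FreeMonoid.toList_mul] at hc
      rcases List.mem_append.mp hc with h | h
      exacts [ha c h, x.2 c h]
    have e1 : a * ↑(w * y) * b = a * (w : FreeMonoid ℕ) * (↑y * b) := by
      push_cast; simp [mul_assoc]
    have e2 : a * (x : FreeMonoid ℕ) * (↑y * b) = (a * ↑x) * ↑y * b := by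
      simp [mul_assoc]
    have e3 : (a * (x : FreeMonoid ℕ)) * ↑z * b = a * ↑(x * z) * b := by
      push_cast; simp [mul_assoc]
    rw [e1, h1 a (↑y * b) ha hyb, e2, h2 (a * ↑x) b hax hb, e3]

/-- The syntactic monoid `M_L = A*/≡_L`. -/
def SynMonoid (A : Finset ℕ) (L : Set (FreeMonoid ℕ)) : Type := (synCon A L).Quotient

instance (A : Finset ℕ) (L : Set (FreeMonoid ℕ)) : Monoid (SynMonoid A L) :=
  inferInstanceAs (Monoid (synCon A L).Quotient)

/-- The subsemigroup `A⁺ ⊆ Λ*` of nonempty words over the finite alphabet `A`. -/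
def plusWordsOver (A : Finset ℕ) : Subsemigroup (FreeMonoid ℕ) where
  carrier := {w | w ≠ 1 ∧ InAlph A w}
  mul_mem' := by
    intro u v hu hv
    refine ⟨?_, ?_⟩
    · intro h
      apply hu.1
      have : FreeMonoid.toList (u * v) = FreeMonoid.toList (1 : FreeMonoid ℕ) := by rw [h]
      rw [FreeMonoid.toList_mul, FreeMonoid.toList_one] at this
      exact (List.append_eq_nil_iff.mp this).1
    · intro a ha
      rw [FreeMonoid.toList_mul] at ha
      rcases List.mem_append.mp ha with h | h
      exacts [hu.2 a h, hv.2 a h]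

/-- The syntactic congruence of `L ⊆ A⁺` on `A⁺` (contexts range over `A*`). -/
def synConS (A : Finset ℕ) (L : Set (FreeMonoid ℕ)) : Con ↥(plusWordsOver A) where
  r u v := ∀ x y : FreeMonoid ℕ, InAlph A x → InAlph A y →
    ((x * ↑u * y ∈ L) ↔ (x * ↑v * y ∈ L))
  iseqv := ⟨fun _ _ _ _ _ => Iff.rfl,
    fun h x y hx hy => (h x y hx hy).symm,
    fun h1 h2 x y hx hy => (h1 x y hx hy).trans (h2 x y hx hy)⟩
  mul' := by
    intro w x y z h1 h2 a b ha hb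
    have hyb : InAlph A ((y : FreeMonoid ℕ) * b) := by
      intro c hc
      rw [FreeMonoid.toList_mul] at hc
      rcases List.mem_append.mp hc with h | h
      exacts [y.2.2 c h, hb c h]
    have hax : InAlph A (a * (x : FreeMonoid ℕ)) := by
      intro c hc
      rw [FreeMonoid.toList_mul] at hc
      rcases List.mem_append.mp hc with h | h
      exacts [ha c h, x.2.2 c h]
    have e1 : a * ↑(w * y) * b = a * (w : FreeMonoid ℕ) * (↑y * b) := by
      push_cast; simp [mul_assoc]
    have e2 : a * (x : FreeMonoid ℕ) * (↑y * b) = (a * ↑x) * ↑y * b := by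
      simp [mul_assoc]
    have e3 : (a * (x : FreeMonoid ℕ)) * ↑z * b = a * ↑(x * z) * b := by
      push_cast; simp [mul_assoc]
    rw [e1, h1 a (↑y * b) ha hyb, e2, h2 (a * ↑x) b hax hb, e3]

/-- The syntactic semigroup of `L ⊆ A⁺`. -/
def SynSemigroup (A : Finset ℕ) (L : Set (FreeMonoid ℕ)) : Type := (synConS A L).Quotient

instance (A : Finset ℕ) (L : Set (FreeMonoid ℕ)) : Semigroup (SynSemigroup A L) :=
  inferInstanceAs (Semigroup (synConS A L).Quotient)

/-- The language of nonempty words over `A` defined by the sentence `φ`. -/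
def LangOfPlus (A : Finset ℕ) (φ : FOForm) : Set (FreeMonoid ℕ) :=
  {w | w ≠ 1 ∧ InAlph A w ∧ SatS (wordToGWord w) φ}

/-- `L ⊆ A⁺` is definable in `F` over the alphabet `A`, over nonempty words. -/
def DefinablePlusIn (F : Set FOForm) (A : Finset ℕ) (L : Set (FreeMonoid ℕ)) : Prop :=
  ∃ φ ∈ F, φ.IsSentence ∧ L = LangOfPlus A φ

/-! ### Concatenation of finite families and unions of valuations -/

/-- Concatenation of a finite family of words `u 0, u 1, …, u (k-1)` (in this order). -/
def GWord.concatFam {k : ℕ} (u : Fin k → GWord) : GWord :=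
  ⟨Σₗ i : Fin k, (u i).carrier, inferInstance,
    inferInstanceAs (Countable (Lex (Σ i : Fin k, (u i).carrier))),
    fun p => (u (ofLex p).1).label (ofLex p).2⟩

/-- The union of a family of valuations with (mutually disjoint) domains, as a valuation
on the concatenation. -/
def combineVal {k : ℕ} (u : Fin k → GWord) (α : ∀ i : Fin k, ℕ → Option (u i).carrier)
    (x : ℕ) : Option (GWord.concatFam u).carrier :=
  (List.finRange k).findSome? fun i => ((α i x).map fun p => toLex ⟨i, p⟩)

/-! ### Auxiliary development: Ehrenfeucht–Fraïssé games on finite words -/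

/-- `m`-fold concatenation power of a list. -/
def wpow (l : List ℕ) : ℕ → List ℕ
  | 0 => []
  | m+1 => wpow l m ++ l

lemma wpow_length (l : List ℕ) (m : ℕ) : (wpow l m).length = m * l.length := by
  induction m with
  | zero => simp [wpow]
  | succ m ih => simp [wpow, ih, Nat.succ_mul]

lemma wpow_add (l : List ℕ) (m n : ℕ) : wpow l (m + n) = wpow l m ++ wpow l n := by
  induction n with
  | zero => simp [wpow]
  | succ n ih => rw [← Nat.add_assoc]; simp [wpow, ih, List.append_assoc]

/-- The list of chosen pairs of positions is a partial isomorphism. -/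
def Agree (w1 w2 : List ℕ) (ps : List (ℕ × ℕ)) : Prop :=
  (w1.length = 0 ↔ w2.length = 0) ∧
  (∀ pq ∈ ps, pq.1 < w1.length ∧ pq.2 < w2.length ∧ w1[pq.1]? = w2[pq.2]? ∧
    (pq.1 = 0 ↔ pq.2 = 0) ∧ (pq.1 + 1 = w1.length ↔ pq.2 + 1 = w2.length)) ∧
  (∀ pq ∈ ps, ∀ pq' ∈ ps,
    (pq.1 < pq'.1 ↔ pq.2 < pq'.2) ∧ (pq.1 + 1 = pq'.1 ↔ pq.2 + 1 = pq'.2))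

/-- Duplicator wins the `n`-round EF game from position list `ps`. -/
def EF : ℕ → List ℕ → List ℕ → List (ℕ × ℕ) → Prop
  | 0, w1, w2, ps => Agree w1 w2 ps
  | n+1, w1, w2, ps => Agree w1 w2 ps ∧
      (∀ p, p < w1.length → ∃ q, q < w2.length ∧ EF n w1 w2 ((p, q) :: ps)) ∧
      (∀ q, q < w2.length → ∃ p, p < w1.length ∧ EF n w1 w2 ((p, q) :: ps))

lemma EF_agree : ∀ {n : ℕ} {w1 w2 : List ℕ} {ps}, EF n w1 w2 ps → Agree w1 w2 ps
  | 0, _, _, _, h => h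
  | _+1, _, _, _, h => h.1

lemma Agree_mono {w1 w2 : List ℕ} {ps ps'} (hsub : ∀ pq ∈ ps', pq ∈ ps)
    (h : Agree w1 w2 ps) : Agree w1 w2 ps' :=
  ⟨h.1, fun pq hpq => h.2.1 pq (hsub pq hpq),
   fun pq hpq pq' hpq' => h.2.2 pq (hsub _ hpq) pq' (hsub _ hpq')⟩

lemma EF_mono : ∀ {n : ℕ} {w1 w2 : List ℕ} {ps ps'},
    (∀ pq ∈ ps', pq ∈ ps) → EF n w1 w2 ps → EF n w1 w2 ps'
  | 0, _, _, _, _, hsub, h => Agree_mono hsub h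
  | n+1, w1, w2, ps, ps', hsub, h => by
    have step : ∀ a : ℕ × ℕ, ∀ pq ∈ a :: ps', pq ∈ a :: ps := by
      intro a pq hpq
      rcases List.mem_cons.mp hpq with h0 | h0
      · exact h0 ▸ List.mem_cons_self
      · exact List.mem_cons_of_mem _ (hsub _ h0)
    refine ⟨Agree_mono hsub h.1, fun p hp => ?_, fun q hq => ?_⟩
    · obtain ⟨q, hq, h'⟩ := h.2.1 p hp
      exact ⟨q, hq, EF_mono (step _) h'⟩
    · obtain ⟨p, hp, h'⟩ := h.2.2 q hq
      exact ⟨p, hp, EF_mono (step _) h'⟩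

lemma EF_down : ∀ {n : ℕ} {w1 w2 : List ℕ} {ps}, EF (n+1) w1 w2 ps → EF n w1 w2 ps
  | 0, _, _, _, h => h.1
  | n+1, w1, w2, ps, h => by
    refine ⟨h.1, fun p hp => ?_, fun q hq => ?_⟩
    · obtain ⟨q, hq, h'⟩ := h.2.1 p hp
      exact ⟨q, hq, EF_down h'⟩
    · obtain ⟨p, hp, h'⟩ := h.2.2 q hq
      exact ⟨p, hp, EF_down h'⟩

lemma EF_refl : ∀ (n : ℕ) (w : List ℕ) (ps : List (ℕ × ℕ)),
    (∀ pq ∈ ps, pq.1 = pq.2 ∧ pq.1 < w.length) → EF n w w ps := by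
  intro n
  induction n with
  | zero =>
    intro w ps H
    refine ⟨Iff.rfl, fun pq hpq => ?_, fun pq hpq pq' hpq' => ?_⟩
    · obtain ⟨he, hl⟩ := H pq hpq
      exact ⟨hl, he ▸ hl, by rw [he], by omega, by omega⟩
    · obtain ⟨he, hl⟩ := H pq hpq
      obtain ⟨he', hl'⟩ := H pq' hpq'
      exact ⟨by omega, by omega⟩
  | succ n ih =>
    intro w ps H
    have step : ∀ p, p < w.length → ∀ pq ∈ (p, p) :: ps, pq.1 = pq.2 ∧ pq.1 < w.length := by
      intro p hp pq hpq
      rcases List.mem_cons.mp hpq with h0 | h0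
      · subst h0; exact ⟨rfl, hp⟩
      · exact H pq h0
    exact ⟨EF_agree (ih w ps H), fun p hp => ⟨p, hp, ih w _ (step p hp)⟩,
      fun p hp => ⟨p, hp, ih w _ (step p hp)⟩⟩

/-- Composition lemma for `Agree`. -/
lemma Agree_comp {w1 w2 v1 v2 : List ℕ} {ps qs}
    (h1 : Agree w1 w2 ps) (h2 : Agree v1 v2 qs) :
    Agree (w1 ++ v1) (w2 ++ v2)
      (ps ++ qs.map fun pq => (pq.1 + w1.length, pq.2 + w2.length)) := by
  obtain ⟨e1, mem1, pair1⟩ := h1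
  obtain ⟨e2, mem2, pair2⟩ := h2
  have memfact : ∀ pq ∈ ps ++ qs.map fun pq => (pq.1 + w1.length, pq.2 + w2.length),
      pq.1 < (w1 ++ v1).length ∧ pq.2 < (w2 ++ v2).length ∧
      (w1 ++ v1)[pq.1]? = (w2 ++ v2)[pq.2]? ∧
      ((pq.1 = 0 ↔ pq.2 = 0) ∧ (pq.1 + 1 = (w1 ++ v1).length ↔ pq.2 + 1 = (w2 ++ v2).length)) := by
    intro pq hpq
    rcases List.mem_append.mp hpq with h | h
    · obtain ⟨b1, b2, hl, hmin, hmax⟩ := mem1 pq h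
      refine ⟨by simp only [List.length_append]; omega,
        by simp only [List.length_append]; omega, ?_, by omega,
        by simp only [List.length_append]; omega⟩
      rw [List.getElem?_append_left b1, List.getElem?_append_left b2, hl]
    · obtain ⟨ab, hab, rfl⟩ := List.mem_map.mp h
      obtain ⟨b1, b2, hl, hmin, hmax⟩ := mem2 ab hab
      refine ⟨by simp only [List.length_append]; omega,
        by simp only [List.length_append]; omega, ?_,
        by simp only [List.length_append]; omega,
        by simp only [List.length_append]; omega⟩
      rw [List.getElem?_append_right (by omega), List.getElem?_append_right (by omega)]
      simpa using hl
  refine ⟨by simp only [List.length_append]; omega,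
    fun pq hpq => ⟨(memfact pq hpq).1, (memfact pq hpq).2.1,
    (memfact pq hpq).2.2.1, (memfact pq hpq).2.2.2.1, (memfact pq hpq).2.2.2.2⟩,
    fun pq hpq pq' hpq' => ?_⟩
  rcases List.mem_append.mp hpq with h | h <;> rcases List.mem_append.mp hpq' with h' | h'
  · exact pair1 pq h pq' h'
  · obtain ⟨ab, hab, rfl⟩ := List.mem_map.mp h'
    obtain ⟨b1, b2, _, hmin, _⟩ := mem2 ab hab
    obtain ⟨c1, c2, _, _, hmax⟩ := mem1 pq h
    refine ⟨?_, ?_⟩ <;> (simp only [List.length_append]; omega)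
  · obtain ⟨ab, hab, rfl⟩ := List.mem_map.mp h
    obtain ⟨b1, b2, _, hmin, _⟩ := mem2 ab hab
    obtain ⟨c1, c2, _, _, hmax⟩ := mem1 pq' h'
    refine ⟨?_, ?_⟩ <;> (simp only [List.length_append]; omega)
  · obtain ⟨ab, hab, rfl⟩ := List.mem_map.mp h
    obtain ⟨ab', hab', rfl⟩ := List.mem_map.mp h'
    obtain ⟨hlt, hsuc⟩ := pair2 ab hab ab' hab'
    refine ⟨?_, ?_⟩ <;> (simp only [List.length_append]; omega)

/-- Composition lemma for EF games. -/
lemma EF_comp : ∀ {n : ℕ} {w1 w2 v1 v2 : List ℕ} {ps qs},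
    EF n w1 w2 ps → EF n v1 v2 qs →
    EF n (w1 ++ v1) (w2 ++ v2)
      (ps ++ qs.map fun pq => (pq.1 + w1.length, pq.2 + w2.length))
  | 0, w1, w2, v1, v2, ps, qs, h1, h2 => Agree_comp h1 h2
  | n+1, w1, w2, v1, v2, ps, qs, h1, h2 => by
    refine ⟨Agree_comp h1.1 h2.1, fun p hp => ?_, fun q hq => ?_⟩
    · by_cases hcase : p < w1.length
      · obtain ⟨q, hq, h'⟩ := h1.2.1 p hcase
        refine ⟨q, by simp only [List.length_append]; omega, ?_⟩
        exact EF_comp h' (EF_down h2)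
      · obtain ⟨a, rfl⟩ : ∃ a, p = a + w1.length := ⟨p - w1.length, by omega⟩
        have ha : a < v1.length := by simp only [List.length_append] at hp; omega
        obtain ⟨b, hb, h'⟩ := h2.2.1 a ha
        refine ⟨b + w2.length, by simp only [List.length_append]; omega, ?_⟩
        refine EF_mono ?_ (EF_comp (EF_down h1) h')
        intro pq hpq
        simp only [List.mem_cons, List.mem_append, List.mem_map] at hpq ⊢
        rcases hpq with h0 | h0 | h0
        · exact Or.inr ⟨(a, b), Or.inl rfl, h0.symm⟩
        · exact Or.inl h0
        · obtain ⟨x, hx, rfl⟩ := h0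
          exact Or.inr ⟨x, Or.inr hx, rfl⟩
    · by_cases hcase : q < w2.length
      · obtain ⟨p, hp, h'⟩ := h1.2.2 q hcase
        refine ⟨p, by simp only [List.length_append]; omega, ?_⟩
        exact EF_comp h' (EF_down h2)
      · obtain ⟨b, rfl⟩ : ∃ b, q = b + w2.length := ⟨q - w2.length, by omega⟩
        have hb : b < v2.length := by simp only [List.length_append] at hq; omega
        obtain ⟨a, ha, h'⟩ := h2.2.2 b hb
        refine ⟨a + w1.length, by simp only [List.length_append]; omega, ?_⟩
        refine EF_mono ?_ (EF_comp (EF_down h1) h')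
        intro pq hpq
        simp only [List.mem_cons, List.mem_append, List.mem_map] at hpq ⊢
        rcases hpq with h0 | h0 | h0
        · exact Or.inr ⟨(a, b), Or.inl rfl, h0.symm⟩
        · exact Or.inl h0
        · obtain ⟨x, hx, rfl⟩ := h0
          exact Or.inr ⟨x, Or.inr hx, rfl⟩

lemma arith_pick (N a b i : ℕ) (ha : 2*N+1 ≤ a) (hb : 2*N+1 ≤ b) (hi : i < a) :
    ∃ i', i' < b ∧ (i = i' ∨ (N ≤ i ∧ N ≤ i')) ∧
      (a-1-i = b-1-i' ∨ (N ≤ a-1-i ∧ N ≤ b-1-i')) := by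
  by_cases h1 : i < N
  · exact ⟨i, by omega, Or.inl rfl, Or.inr (by omega)⟩
  · by_cases h2 : a-1-i < N
    · exact ⟨b-1-(a-1-i), by omega, Or.inr (by omega), Or.inl (by omega)⟩
    · exact ⟨N, by omega, Or.inr (by omega), Or.inr (by omega)⟩

/-- The power lemma: high powers of a word are EF-equivalent. -/
lemma EF_pow : ∀ (n : ℕ) (w : List ℕ) (a b : ℕ),
    2^(n+1) - 1 ≤ a → 2^(n+1) - 1 ≤ b → EF n (wpow w a) (wpow w b) [] := by
  intro n
  induction n with
  | zero =>
    intro w a b ha hb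
    refine ⟨?_, by simp, by simp⟩
    simp only [wpow_length, Nat.mul_eq_zero]
    norm_num at ha hb
    omega
  | succ n ih =>
    intro w a b ha hb
    have hpow : (2:ℕ)^(n+1+1) = 2^(n+1) * 2 := pow_succ 2 (n+1)
    have hpos : 1 ≤ (2:ℕ)^(n+1) := Nat.one_le_two_pow
    set N := 2^(n+1) - 1 with hN
    have ha' : 2*N+1 ≤ a := by omega
    have hb' : 2*N+1 ≤ b := by omega
    -- the pinned-pair construction
    have pin : ∀ (i i' j : ℕ), i < a → i' < b → j < w.length →
        (i = i' ∨ (N ≤ i ∧ N ≤ i')) → (a-1-i = b-1-i' ∨ (N ≤ a-1-i ∧ N ≤ b-1-i')) →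
        EF n (wpow w a) (wpow w b) [(j + i * w.length, j + i' * w.length)] := by
      intro i i' j hi hi' hj hL hR
      have hsplit : ∀ (c k : ℕ), k < c → wpow w c = wpow w k ++ (w ++ wpow w (c-1-k)) := by
        intro c k hk
        have hw1 : w = wpow w 1 := by simp [wpow]
        conv_lhs => rw [show c = k + (1 + (c-1-k)) by omega]
        rw [wpow_add, wpow_add, ← hw1]
      rw [hsplit a i hi, hsplit b i' hi']
      have EFleft : EF n (wpow w i) (wpow w i') [] := by
        rcases hL with rfl | ⟨hL1, hL2⟩
        · exact EF_refl n _ [] (by simp)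
        · exact ih w i i' (by omega) (by omega)
      have EFright : EF n (wpow w (a-1-i)) (wpow w (b-1-i')) [] := by
        rcases hR with heq | ⟨hR1, hR2⟩
        · rw [heq]; exact EF_refl n _ [] (by simp)
        · exact ih w _ _ (by omega) (by omega)
      have EFmid : EF n w w [(j, j)] := EF_refl n w [(j, j)] (by simp [hj])
      have := EF_comp EFleft (EF_comp EFmid EFright)
      simpa [wpow_length] using this
    refine ⟨?_, fun p hp => ?_, fun q hq => ?_⟩
    · refine ⟨?_, by simp, by simp⟩
      simp only [wpow_length, Nat.mul_eq_zero]
      omega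
    · rw [wpow_length] at hp
      have hlen : 0 < w.length := by
        rcases Nat.eq_zero_or_pos w.length with h | h
        · rw [h, Nat.mul_zero] at hp; omega
        · exact h
      obtain ⟨i, j, rfl, hj, hi⟩ : ∃ i j, p = j + i * w.length ∧ j < w.length ∧ i < a := by
        refine ⟨p / w.length, p % w.length, ?_, Nat.mod_lt _ hlen, ?_⟩
        · rw [Nat.add_comm, Nat.div_add_mod']
        · exact (Nat.div_lt_iff_lt_mul hlen).mpr hp
      obtain ⟨i', hi', hL, hR⟩ := arith_pick N a b i ha' hb' hi
      refine ⟨j + i' * w.length, ?_, pin i i' j hi hi' hj hL hR⟩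
      rw [wpow_length]
      calc j + i' * w.length < w.length + i' * w.length := by omega
        _ = (i' + 1) * w.length := by ring
        _ ≤ b * w.length := Nat.mul_le_mul_right _ hi'
    · rw [wpow_length] at hq
      have hlen : 0 < w.length := by
        rcases Nat.eq_zero_or_pos w.length with h | h
        · rw [h, Nat.mul_zero] at hq; omega
        · exact h
      obtain ⟨i', j, rfl, hj, hi'⟩ : ∃ i' j, q = j + i' * w.length ∧ j < w.length ∧ i' < b := by
        refine ⟨q / w.length, q % w.length, ?_, Nat.mod_lt _ hlen, ?_⟩
        · rw [Nat.add_comm, Nat.div_add_mod']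
        · exact (Nat.div_lt_iff_lt_mul hlen).mpr hq
      obtain ⟨i, hi, hL, hR⟩ := arith_pick N b a i' hb' ha' hi'
      refine ⟨j + i * w.length, ?_, pin i i' j hi hi' hj ?_ ?_⟩
      · rw [wpow_length]
        calc j + i * w.length < w.length + i * w.length := by omega
          _ = (i + 1) * w.length := by ring
          _ ≤ a * w.length := Nat.mul_le_mul_right _ hi
      · omega
      · omega

/-! ### Soundness of EF games -/

lemma fin_isEmpty_iff (m : ℕ) : IsEmpty (Fin m) ↔ m = 0 := by
  constructor
  · intro h
    by_contra hm
    exact h.false ⟨0, by omega⟩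
  · rintro rfl
    exact Fin.isEmpty

lemma fin_suc_iff {m : ℕ} (p q : Fin m) :
    (p < q ∧ ∀ r : Fin m, ¬ (p < r ∧ r < q)) ↔ (q : ℕ) = p + 1 := by
  constructor
  · rintro ⟨h, h2⟩
    by_contra hne
    rw [Fin.lt_def] at h
    have hlt : (p : ℕ) + 1 < q := by omega
    exact h2 ⟨p + 1, by omega⟩ ⟨by rw [Fin.lt_def]; simp, by rw [Fin.lt_def]; simpa using hlt⟩
  · intro h
    refine ⟨by rw [Fin.lt_def]; omega, ?_⟩
    rintro r ⟨h1, h2⟩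
    rw [Fin.lt_def] at h1 h2
    omega

lemma fin_min_iff {m : ℕ} (p : Fin m) : (∀ q : Fin m, p ≤ q) ↔ (p : ℕ) = 0 := by
  constructor
  · intro h
    have := h ⟨0, p.pos⟩
    simp [Fin.le_def] at this
    omega
  · intro h q
    rw [Fin.le_def]
    omega

lemma fin_max_iff {m : ℕ} (p : Fin m) : (∀ q : Fin m, q ≤ p) ↔ (p : ℕ) + 1 = m := by
  constructor
  · intro h
    have := h ⟨m - 1, by have := p.is_lt; omega⟩
    rw [Fin.le_def] at this
    simp at this
    omega
  · intro h q
    rw [Fin.le_def]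
    omega

/-- Compatibility of valuations with the chosen pairs. -/
def Compat (w1 w2 : List ℕ) (ps : List (ℕ × ℕ))
    (α1 : ℕ → Option (Fin w1.length)) (α2 : ℕ → Option (Fin w2.length)) : Prop :=
  ∀ x, (α1 x = none ∧ α2 x = none) ∨
    ∃ p q, α1 x = some p ∧ α2 x = some q ∧ ((p : ℕ), (q : ℕ)) ∈ ps

/-- Soundness: EF-equivalent configurations satisfy the same formulas of bounded
quantifier depth. -/
lemma EF_sound (w1 w2 : List ℕ) (φ : FOForm) :
    ∀ (n : ℕ) (ps : List (ℕ × ℕ)) (α1 : ℕ → Option (Fin w1.length))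
      (α2 : ℕ → Option (Fin w2.length)),
    EF n w1 w2 ps → Compat w1 w2 ps α1 α2 → φ.qd ≤ n →
    ((listToGWord w1).Sat α1 φ ↔ (listToGWord w2).Sat α2 φ) := by
  induction φ with
  | top => intro n ps α1 α2 hEF hc hqd; simp [GWord.Sat]
  | bot => intro n ps α1 α2 hEF hc hqd; simp [GWord.Sat]
  | empt =>
    intro n ps α1 α2 hEF hc hqd
    have h := (EF_agree hEF).1
    simp only [GWord.Sat, listToGWord]
    rw [fin_isEmpty_iff, fin_isEmpty_iff]
    exact h
  | eq x y =>
    intro n ps α1 α2 hEF hc hqd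
    have ag := EF_agree hEF
    simp only [GWord.Sat]
    rcases hc x with ⟨hx1, hx2⟩ | ⟨p, q, hp, hq, hmem⟩
    · simp [hx1, hx2]
    · rcases hc y with ⟨hy1, hy2⟩ | ⟨p', q', hp', hq', hmem'⟩
      · simp [hy1, hy2, hp, hq]
      · simp only [hp, hq, hp', hq', Option.some.injEq]
        have h1 := (ag.2.2 _ hmem _ hmem').1
        have h2 := (ag.2.2 _ hmem' _ hmem).1
        constructor
        · rintro ⟨a, b, ⟨⟩, ⟨⟩, rfl⟩
          exact ⟨q, q', rfl, rfl, Fin.ext (by omega)⟩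
        · rintro ⟨a, b, ⟨⟩, ⟨⟩, rfl⟩
          exact ⟨p, p', rfl, rfl, Fin.ext (by omega)⟩
  | lab x a =>
    intro n ps α1 α2 hEF hc hqd
    have ag := EF_agree hEF
    simp only [GWord.Sat]
    rcases hc x with ⟨hx1, hx2⟩ | ⟨p, q, hp, hq, hmem⟩
    · simp [hx1, hx2]
    · obtain ⟨b1, b2, hl, _, _⟩ := ag.2.1 _ hmem
      rw [List.getElem?_eq_getElem b1, List.getElem?_eq_getElem b2] at hl
      have hlab : (listToGWord w1).label p = (listToGWord w2).label q := by
        simp only [listToGWord, List.get_eq_getElem]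
        exact Option.some.inj hl
      simp only [hp, hq, Option.some.injEq]
      constructor
      · rintro ⟨c, ⟨⟩, rfl⟩; exact ⟨q, rfl, hlab.symm⟩
      · rintro ⟨c, ⟨⟩, rfl⟩; exact ⟨p, rfl, hlab⟩
  | lt x y =>
    intro n ps α1 α2 hEF hc hqd
    have ag := EF_agree hEF
    simp only [GWord.Sat]
    rcases hc x with ⟨hx1, hx2⟩ | ⟨p, q, hp, hq, hmem⟩
    · simp [hx1, hx2]
    · rcases hc y with ⟨hy1, hy2⟩ | ⟨p', q', hp', hq', hmem'⟩
      · simp [hy1, hy2, hp, hq]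
      · have h1 := (ag.2.2 _ hmem _ hmem').1
        simp only [hp, hq, hp', hq', Option.some.injEq]
        constructor
        · rintro ⟨a, b, ⟨⟩, ⟨⟩, hab⟩
          exact ⟨q, q', rfl, rfl, by change (p : Fin w1.length) < p' at hab; change (q : Fin w2.length) < q'; rw [Fin.lt_def] at hab ⊢; omega⟩
        · rintro ⟨a, b, ⟨⟩, ⟨⟩, hab⟩
          exact ⟨p, p', rfl, rfl, by change (q : Fin w2.length) < q' at hab; change (p : Fin w1.length) < p'; rw [Fin.lt_def] at hab ⊢; omega⟩
  | le x y =>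
    intro n ps α1 α2 hEF hc hqd
    have ag := EF_agree hEF
    simp only [GWord.Sat]
    rcases hc x with ⟨hx1, hx2⟩ | ⟨p, q, hp, hq, hmem⟩
    · simp [hx1, hx2]
    · rcases hc y with ⟨hy1, hy2⟩ | ⟨p', q', hp', hq', hmem'⟩
      · simp [hy1, hy2, hp, hq]
      · have h1 := (ag.2.2 _ hmem _ hmem').1
        have h2 := (ag.2.2 _ hmem' _ hmem).1
        simp only [hp, hq, hp', hq', Option.some.injEq]
        constructor
        · rintro ⟨a, b, ⟨⟩, ⟨⟩, hab⟩
          exact ⟨q, q', rfl, rfl, by change (p : Fin w1.length) ≤ p' at hab; change (q : Fin w2.length) ≤ q'; rw [Fin.le_def] at hab ⊢; omega⟩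
        · rintro ⟨a, b, ⟨⟩, ⟨⟩, hab⟩
          exact ⟨p, p', rfl, rfl, by change (q : Fin w2.length) ≤ q' at hab; change (p : Fin w1.length) ≤ p'; rw [Fin.le_def] at hab ⊢; omega⟩
  | suc x y =>
    intro n ps α1 α2 hEF hc hqd
    have ag := EF_agree hEF
    simp only [GWord.Sat]
    rcases hc x with ⟨hx1, hx2⟩ | ⟨p, q, hp, hq, hmem⟩
    · simp [hx1, hx2]
    · rcases hc y with ⟨hy1, hy2⟩ | ⟨p', q', hp', hq', hmem'⟩
      · simp [hy1, hy2, hp, hq]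
      · have h1 := (ag.2.2 _ hmem _ hmem').2
        simp only [hp, hq, hp', hq', Option.some.injEq]
        constructor
        · rintro ⟨a, b, ⟨⟩, ⟨⟩, hab1, hab2⟩
          have := (fin_suc_iff p p').mp ⟨hab1, hab2⟩
          have h' := (fin_suc_iff q q').mpr (by omega)
          exact ⟨q, q', rfl, rfl, h'.1, h'.2⟩
        · rintro ⟨a, b, ⟨⟩, ⟨⟩, hab1, hab2⟩
          have := (fin_suc_iff q q').mp ⟨hab1, hab2⟩
          have h' := (fin_suc_iff p p').mpr (by omega)
          exact ⟨p, p', rfl, rfl, h'.1, h'.2⟩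
  | fmin x =>
    intro n ps α1 α2 hEF hc hqd
    have ag := EF_agree hEF
    simp only [GWord.Sat]
    rcases hc x with ⟨hx1, hx2⟩ | ⟨p, q, hp, hq, hmem⟩
    · simp [hx1, hx2]
    · obtain ⟨_, _, _, hmin, _⟩ := ag.2.1 _ hmem
      simp only [hp, hq, Option.some.injEq]
      constructor
      · rintro ⟨a, ⟨⟩, hall⟩
        exact ⟨q, rfl, (fin_min_iff q).mpr (by have := (fin_min_iff p).mp hall; omega)⟩
      · rintro ⟨a, ⟨⟩, hall⟩
        exact ⟨p, rfl, (fin_min_iff p).mpr (by have := (fin_min_iff q).mp hall; omega)⟩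
  | fmax x =>
    intro n ps α1 α2 hEF hc hqd
    have ag := EF_agree hEF
    simp only [GWord.Sat]
    rcases hc x with ⟨hx1, hx2⟩ | ⟨p, q, hp, hq, hmem⟩
    · simp [hx1, hx2]
    · obtain ⟨_, _, _, _, hmax⟩ := ag.2.1 _ hmem
      simp only [hp, hq, Option.some.injEq]
      constructor
      · rintro ⟨a, ⟨⟩, hall⟩
        exact ⟨q, rfl, (fin_max_iff q).mpr (by have := (fin_max_iff p).mp hall; omega)⟩
      · rintro ⟨a, ⟨⟩, hall⟩
        exact ⟨p, rfl, (fin_max_iff p).mpr (by have := (fin_max_iff q).mp hall; omega)⟩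
  | not φ ih =>
    intro n ps α1 α2 hEF hc hqd
    simp only [GWord.Sat]
    rw [ih n ps α1 α2 hEF hc hqd]
  | or φ ψ ih1 ih2 =>
    intro n ps α1 α2 hEF hc hqd
    simp only [FOForm.qd, max_le_iff] at hqd
    simp only [GWord.Sat]
    rw [ih1 n ps α1 α2 hEF hc hqd.1, ih2 n ps α1 α2 hEF hc hqd.2]
  | and φ ψ ih1 ih2 =>
    intro n ps α1 α2 hEF hc hqd
    simp only [FOForm.qd, max_le_iff] at hqd
    simp only [GWord.Sat]
    rw [ih1 n ps α1 α2 hEF hc hqd.1, ih2 n ps α1 α2 hEF hc hqd.2]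
  | ex x φ ih =>
    intro n ps α1 α2 hEF hc hqd
    simp only [FOForm.qd] at hqd
    obtain ⟨m, rfl⟩ : ∃ m, n = m + 1 := ⟨n - 1, by omega⟩
    obtain ⟨ag, forth, back⟩ := hEF
    have hcomp : ∀ (p : Fin w1.length) (q : Fin w2.length),
        Compat w1 w2 (((p : ℕ), (q : ℕ)) :: ps)
          (fun y => if y = x then some p else α1 y)
          (fun y => if y = x then some q else α2 y) := by
      intro p q y
      by_cases hy : y = x
      · exact Or.inr ⟨p, q, by simp [hy], by simp [hy], List.mem_cons_self⟩
      · rcases hc y with ⟨h1, h2⟩ | ⟨p', q', h1, h2, h3⟩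
        · exact Or.inl ⟨by simp [hy, h1], by simp [hy, h2]⟩
        · exact Or.inr ⟨p', q', by simp [hy, h1], by simp [hy, h2],
            List.mem_cons_of_mem _ h3⟩
    simp only [GWord.Sat]
    constructor
    · rintro ⟨p, hsat⟩
      obtain ⟨q, hq, hEF'⟩ := forth (Fin.val p) (Fin.isLt p)
      exact ⟨⟨q, hq⟩, (ih m _ _ _ hEF' (hcomp p ⟨q, hq⟩) (by omega)).mp hsat⟩
    · rintro ⟨q, hsat⟩
      obtain ⟨p, hp, hEF'⟩ := back (Fin.val q) (Fin.isLt q)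
      exact ⟨⟨p, hp⟩, (ih m _ _ _ hEF' (hcomp ⟨p, hp⟩ q) (by omega)).mpr hsat⟩
  | all x φ ih =>
    intro n ps α1 α2 hEF hc hqd
    simp only [FOForm.qd] at hqd
    obtain ⟨m, rfl⟩ : ∃ m, n = m + 1 := ⟨n - 1, by omega⟩
    obtain ⟨ag, forth, back⟩ := hEF
    have hcomp : ∀ (p : Fin w1.length) (q : Fin w2.length),
        Compat w1 w2 (((p : ℕ), (q : ℕ)) :: ps)
          (fun y => if y = x then some p else α1 y)
          (fun y => if y = x then some q else α2 y) := by
      intro p q y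
      by_cases hy : y = x
      · exact Or.inr ⟨p, q, by simp [hy], by simp [hy], List.mem_cons_self⟩
      · rcases hc y with ⟨h1, h2⟩ | ⟨p', q', h1, h2, h3⟩
        · exact Or.inl ⟨by simp [hy, h1], by simp [hy, h2]⟩
        · exact Or.inr ⟨p', q', by simp [hy, h1], by simp [hy, h2],
            List.mem_cons_of_mem _ h3⟩
    simp only [GWord.Sat]
    constructor
    · intro h q
      obtain ⟨p, hp, hEF'⟩ := back (Fin.val q) (Fin.isLt q)
      exact (ih m _ _ _ hEF' (hcomp ⟨p, hp⟩ q) (by omega)).mp (h ⟨p, hp⟩)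
    · intro h p
      obtain ⟨q, hq, hEF'⟩ := forth (Fin.val p) (Fin.isLt p)
      exact (ih m _ _ _ hEF' (hcomp p ⟨q, hq⟩) (by omega)).mpr (h ⟨q, hq⟩)

lemma toList_pow (w : FreeMonoid ℕ) (m : ℕ) :
    FreeMonoid.toList (w ^ m) = wpow (FreeMonoid.toList w) m := by
  induction m with
  | zero => rfl
  | succ m ih => rw [pow_succ, FreeMonoid.toList_mul, ih]; rfl

/-- the syntactic monoid of every first-order definable language is
aperiodic: there is `k ≥ 1` with `u^(k+1) = u^k` for all `u ∈ M_L`. -/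
theorem statement_9 (A : Finset ℕ) (L : Set (FreeMonoid ℕ))
    (hdef : DefinableIn Set.univ A L) :
    ∃ k : ℕ, 1 ≤ k ∧ ∀ u : SynMonoid A L, u ^ (k + 1) = u ^ k := by
  obtain ⟨φ, -, hsent, rfl⟩ := hdef
  have hpos : 1 ≤ (2:ℕ)^(φ.qd+1) := Nat.one_le_two_pow
  have h2 : (2:ℕ) ≤ 2^(φ.qd+1) := by
    calc (2:ℕ) = 2^1 := by norm_num
    _ ≤ 2^(φ.qd+1) := Nat.pow_le_pow_right (by norm_num) (by omega)
  refine ⟨2^(φ.qd+1) - 1, by omega, ?_⟩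
  set k := 2^(φ.qd+1) - 1 with hk
  intro u
  obtain ⟨w, rfl⟩ := Con.mk'_surjective (c := synCon A (LangOf A φ)) u
  show ((synCon A (LangOf A φ)).mk' w : (synCon A (LangOf A φ)).Quotient) ^ (k + 1)
      = ((synCon A (LangOf A φ)).mk' w : (synCon A (LangOf A φ)).Quotient) ^ k
  rw [← map_pow, ← map_pow]
  rw [Con.coe_mk', Con.eq]
  intro x y hx hy
  -- both sides have all letters in `A`
  have hin : ∀ m : ℕ, InAlph A (x * ↑(w ^ m) * y) := by
    intro m
    have : (x * ↑(w ^ m) * y) ∈ wordsOver A := by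
      refine mul_mem (mul_mem hx ?_) hy
      exact (w ^ m).2
    exact this
  -- the satisfaction transfer
  have key : ∀ m m' : ℕ, k ≤ m → k ≤ m' →
      (SatS (wordToGWord (x * ↑(w ^ m) * y)) φ ↔
       SatS (wordToGWord (x * ↑(w ^ m') * y)) φ) := by
    intro m m' hm hm'
    have e : ∀ j : ℕ, FreeMonoid.toList (x * ((w ^ j : ↥(wordsOver A)) : FreeMonoid ℕ) * y) =
        (FreeMonoid.toList x ++ wpow (FreeMonoid.toList (w : FreeMonoid ℕ)) j) ++
          FreeMonoid.toList y := by
      intro j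
      rw [FreeMonoid.toList_mul, FreeMonoid.toList_mul, SubmonoidClass.coe_pow, toList_pow]
    have hEF : EF φ.qd (FreeMonoid.toList (x * ↑(w ^ m) * y))
        (FreeMonoid.toList (x * ↑(w ^ m') * y)) [] := by
      rw [e m, e m']
      have h0 : EF φ.qd (wpow (FreeMonoid.toList (w : FreeMonoid ℕ)) m)
          (wpow (FreeMonoid.toList (w : FreeMonoid ℕ)) m') [] :=
        EF_pow φ.qd _ m m' hm hm'
      have hx' := EF_refl φ.qd (FreeMonoid.toList x) [] (by simp)
      have hy' := EF_refl φ.qd (FreeMonoid.toList y) [] (by simp)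
      have := EF_comp (EF_comp hx' h0) hy'
      simpa using this
    exact EF_sound _ _ φ φ.qd [] _ _ hEF (fun z => Or.inl ⟨rfl, rfl⟩) le_rfl
  constructor
  · rintro ⟨-, hsat⟩
    exact ⟨hin k, (key (k+1) k (by omega) le_rfl).mp hsat⟩
  · rintro ⟨-, hsat⟩
    exact ⟨hin (k+1), (key k (k+1) le_rfl (by omega)).mp hsat⟩

end EFGames
end

section
/- Let F be a fragment of bounded quantifier depth and let ⟨u,α⟩, ⟨v,β⟩ be V-valuations. If ⟨u,α⟩ ⊨ φ implies ⟨v,β⟩ ⊨ φ for all formulas φ ∈ F with FV(φ) ⊆ V, then Duplicator has a winning strategy in the configuration (F, ⟨u,α⟩, ⟨v,β⟩) of the F-game. (Here the logic is over words over a fixed finite alphabet A ⊆ Λ, so that up to logical equivalence there are only finitely many formulas of each quantifier depth with free variables in V.) -/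
set_option autoImplicit false

namespace EFGames

/-! ### Auxiliary development for statement_13 -/

open Classical in
/-- Valuations on a word. -/
abbrev Val (w : GWord) : Type := ℕ → Option w.carrier

lemma sat_congrFV (w : GWord) : ∀ (φ : FOForm) (γ γ' : Val w),
    (∀ y ∈ φ.FV, γ y = γ' y) → (w.Sat γ φ ↔ w.Sat γ' φ) := by
  intro φ
  induction φ with
  | top => exact fun _ _ _ => Iff.rfl
  | bot => exact fun _ _ _ => Iff.rfl
  | empt => exact fun _ _ _ => Iff.rfl
  | eq x y =>
      intro γ γ' h
      have hx := h x (by simp [FOForm.FV])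
      have hy := h y (by simp [FOForm.FV])
      simp only [GWord.Sat, hx, hy]
  | lt x y =>
      intro γ γ' h
      have hx := h x (by simp [FOForm.FV])
      have hy := h y (by simp [FOForm.FV])
      simp only [GWord.Sat, hx, hy]
  | le x y =>
      intro γ γ' h
      have hx := h x (by simp [FOForm.FV])
      have hy := h y (by simp [FOForm.FV])
      simp only [GWord.Sat, hx, hy]
  | suc x y =>
      intro γ γ' h
      have hx := h x (by simp [FOForm.FV])
      have hy := h y (by simp [FOForm.FV])
      simp only [GWord.Sat, hx, hy]
  | lab x a =>
      intro γ γ' h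
      have hx := h x (by simp [FOForm.FV])
      simp only [GWord.Sat, hx]
  | fmin x =>
      intro γ γ' h
      have hx := h x (by simp [FOForm.FV])
      simp only [GWord.Sat, hx]
  | fmax x =>
      intro γ γ' h
      have hx := h x (by simp [FOForm.FV])
      simp only [GWord.Sat, hx]
  | not ψ ih =>
      intro γ γ' h
      exact not_congr (ih γ γ' h)
  | or ψ χ ih1 ih2 =>
      intro γ γ' h
      exact or_congr
        (ih1 γ γ' fun y hy => h y (by simp only [FOForm.FV, Finset.mem_union]; exact Or.inl hy))
        (ih2 γ γ' fun y hy => h y (by simp only [FOForm.FV, Finset.mem_union]; exact Or.inr hy))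
  | and ψ χ ih1 ih2 =>
      intro γ γ' h
      exact and_congr
        (ih1 γ γ' fun y hy => h y (by simp only [FOForm.FV, Finset.mem_union]; exact Or.inl hy))
        (ih2 γ γ' fun y hy => h y (by simp only [FOForm.FV, Finset.mem_union]; exact Or.inr hy))
  | ex x ψ ih =>
      intro γ γ' h
      simp only [GWord.Sat]
      refine exists_congr fun p => ih _ _ fun y hy => ?_
      by_cases hyx : y = x
      · simp [hyx]
      · simp only [if_neg hyx]
        exact h y (by simp only [FOForm.FV, Finset.mem_erase]; exact ⟨hyx, hy⟩)
  | all x ψ ih =>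
      intro γ γ' h
      simp only [GWord.Sat]
      refine forall_congr' fun p => ih _ _ fun y hy => ?_
      by_cases hyx : y = x
      · simp [hyx]
      · simp only [if_neg hyx]
        exact h y (by simp only [FOForm.FV, Finset.mem_erase]; exact ⟨hyx, hy⟩)

/-! Truth functions of atomic formulas. -/

def eqTF (w : GWord) (s : ℕ × ℕ) : Val w → Prop :=
  fun γ => ∃ p q : w.carrier, γ s.1 = some p ∧ γ s.2 = some q ∧ p = q

def ltTF (w : GWord) (s : ℕ × ℕ) : Val w → Prop :=
  fun γ => ∃ p q : w.carrier, γ s.1 = some p ∧ γ s.2 = some q ∧ p < q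

def leTF (w : GWord) (s : ℕ × ℕ) : Val w → Prop :=
  fun γ => ∃ p q : w.carrier, γ s.1 = some p ∧ γ s.2 = some q ∧ p ≤ q

def sucTF (w : GWord) (s : ℕ × ℕ) : Val w → Prop :=
  fun γ => ∃ p q : w.carrier, γ s.1 = some p ∧ γ s.2 = some q ∧ p < q ∧
    ∀ r : w.carrier, ¬ (p < r ∧ r < q)

def labTF (w : GWord) (s : ℕ × ℕ) : Val w → Prop :=
  fun γ => ∃ p : w.carrier, γ s.1 = some p ∧ w.label p = s.2

def minTF (w : GWord) (x : ℕ) : Val w → Prop :=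
  fun γ => ∃ p : w.carrier, γ x = some p ∧ ∀ q : w.carrier, p ≤ q

def maxTF (w : GWord) (x : ℕ) : Val w → Prop :=
  fun γ => ∃ p : w.carrier, γ x = some p ∧ ∀ q : w.carrier, q ≤ p

def atomTFs (A : Finset ℕ) (w : GWord) (W : Finset ℕ) : Set (Val w → Prop) :=
  eqTF w '' (↑W ×ˢ ↑W) ∪ ltTF w '' (↑W ×ˢ ↑W) ∪ leTF w '' (↑W ×ˢ ↑W) ∪
  sucTF w '' (↑W ×ˢ ↑W) ∪ labTF w '' (↑W ×ˢ ↑A) ∪ minTF w '' ↑W ∪ maxTF w '' ↑W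

lemma atomTFs_finite (A : Finset ℕ) (w : GWord) (W : Finset ℕ) : (atomTFs A w W).Finite := by
  repeat' apply Set.Finite.union
  all_goals apply Set.Finite.image
  all_goals first
    | exact W.finite_toSet.prod W.finite_toSet
    | exact W.finite_toSet.prod A.finite_toSet
    | exact W.finite_toSet

def exTF (w : GWord) (x₀ : ℕ) (g : Val w → Prop) : Val w → Prop :=
  fun γ => ∃ p : w.carrier, g (updVal γ x₀ p)

/-- The set of truth functions of formulas of quantifier depth `≤ n` read through a
variable renaming into `W`. -/
def TFset (w : GWord) (n : ℕ) (W : Finset ℕ) : Set (Val w → Prop) :=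
  {f | ∃ (φ : FOForm) (σ : ℕ → ℕ), φ.qd ≤ n ∧ (∀ y ∈ φ.FV, σ y ∈ W) ∧
    f = fun γ => w.Sat (fun z => γ (σ z)) φ}

def freshVar (W : Finset ℕ) : ℕ := W.sup id + 1

lemma freshVar_not_mem (W : Finset ℕ) : freshVar W ∉ W := by
  intro h
  have := Finset.le_sup (f := id) h
  simp only [id_eq, freshVar] at this ⊢
  omega

def gens (A : Finset ℕ) (w : GWord) : ℕ → Finset ℕ → Set (Val w → Prop)
  | 0, W => atomTFs A w W
  | n+1, W => atomTFs A w W ∪ exTF w (freshVar W) '' TFset w n (insert (freshVar W) W)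

lemma atomTFs_subset_gens (A : Finset ℕ) (w : GWord) (n : ℕ) (W : Finset ℕ) :
    atomTFs A w W ⊆ gens A w n W := by
  cases n with
  | zero => exact subset_rfl
  | succ m => exact Set.subset_union_left

open Classical in
lemma tf_boolean (A : Finset ℕ) (w : GWord) (hw : ∀ p : w.carrier, w.label p ∈ A)
    (n : ℕ) (W : Finset ℕ) :
    ∀ (φ : FOForm) (σ : ℕ → ℕ), φ.qd ≤ n → (∀ y ∈ φ.FV, σ y ∈ W) →
    ∃ B : ((gens A w n W) → Prop) → Prop,
      ∀ γ : Val w, w.Sat (fun z => γ (σ z)) φ ↔ B (fun g => g.1 γ) := by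
  intro φ
  induction φ with
  | top =>
      intro σ _ _
      exact ⟨fun _ => True, fun γ => by simp only [GWord.Sat]⟩
  | bot =>
      intro σ _ _
      exact ⟨fun _ => False, fun γ => by simp only [GWord.Sat]⟩
  | empt =>
      intro σ _ _
      exact ⟨fun _ => IsEmpty w.carrier, fun γ => by simp only [GWord.Sat]⟩
  | eq x y =>
      intro σ _ hFV
      have hx : σ x ∈ (W : Set ℕ) := hFV x (by simp [FOForm.FV])
      have hy : σ y ∈ (W : Set ℕ) := hFV y (by simp [FOForm.FV])
      have hmem : eqTF w (σ x, σ y) ∈ gens A w n W :=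
        atomTFs_subset_gens A w n W
          (Or.inl (Or.inl (Or.inl (Or.inl (Or.inl (Or.inl ⟨(σ x, σ y), ⟨hx, hy⟩, rfl⟩))))))
      exact ⟨fun e => e ⟨_, hmem⟩, fun γ => Iff.rfl⟩
  | lt x y =>
      intro σ _ hFV
      have hx : σ x ∈ (W : Set ℕ) := hFV x (by simp [FOForm.FV])
      have hy : σ y ∈ (W : Set ℕ) := hFV y (by simp [FOForm.FV])
      have hmem : ltTF w (σ x, σ y) ∈ gens A w n W :=
        atomTFs_subset_gens A w n W
          (Or.inl (Or.inl (Or.inl (Or.inl (Or.inl (Or.inr ⟨(σ x, σ y), ⟨hx, hy⟩, rfl⟩))))))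
      exact ⟨fun e => e ⟨_, hmem⟩, fun γ => Iff.rfl⟩
  | le x y =>
      intro σ _ hFV
      have hx : σ x ∈ (W : Set ℕ) := hFV x (by simp [FOForm.FV])
      have hy : σ y ∈ (W : Set ℕ) := hFV y (by simp [FOForm.FV])
      have hmem : leTF w (σ x, σ y) ∈ gens A w n W :=
        atomTFs_subset_gens A w n W
          (Or.inl (Or.inl (Or.inl (Or.inl (Or.inr ⟨(σ x, σ y), ⟨hx, hy⟩, rfl⟩)))))
      exact ⟨fun e => e ⟨_, hmem⟩, fun γ => Iff.rfl⟩
  | suc x y =>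
      intro σ _ hFV
      have hx : σ x ∈ (W : Set ℕ) := hFV x (by simp [FOForm.FV])
      have hy : σ y ∈ (W : Set ℕ) := hFV y (by simp [FOForm.FV])
      have hmem : sucTF w (σ x, σ y) ∈ gens A w n W :=
        atomTFs_subset_gens A w n W
          (Or.inl (Or.inl (Or.inl (Or.inr ⟨(σ x, σ y), ⟨hx, hy⟩, rfl⟩))))
      exact ⟨fun e => e ⟨_, hmem⟩, fun γ => Iff.rfl⟩
  | lab x a =>
      intro σ _ hFV
      have hx : σ x ∈ (W : Set ℕ) := hFV x (by simp [FOForm.FV])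
      by_cases ha : a ∈ A
      · have hmem : labTF w (σ x, a) ∈ gens A w n W :=
          atomTFs_subset_gens A w n W
            (Or.inl (Or.inl (Or.inr ⟨(σ x, a), ⟨hx, ha⟩, rfl⟩)))
        exact ⟨fun e => e ⟨_, hmem⟩, fun γ => Iff.rfl⟩
      · refine ⟨fun _ => False, fun γ => ?_⟩
        simp only [GWord.Sat, iff_false]
        rintro ⟨p, -, hp⟩
        exact ha (hp ▸ hw p)
  | fmin x =>
      intro σ _ hFV
      have hx : σ x ∈ (W : Set ℕ) := hFV x (by simp [FOForm.FV])
      have hmem : minTF w (σ x) ∈ gens A w n W :=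
        atomTFs_subset_gens A w n W (Or.inl (Or.inr ⟨σ x, hx, rfl⟩))
      exact ⟨fun e => e ⟨_, hmem⟩, fun γ => Iff.rfl⟩
  | fmax x =>
      intro σ _ hFV
      have hx : σ x ∈ (W : Set ℕ) := hFV x (by simp [FOForm.FV])
      have hmem : maxTF w (σ x) ∈ gens A w n W :=
        atomTFs_subset_gens A w n W (Or.inr ⟨σ x, hx, rfl⟩)
      exact ⟨fun e => e ⟨_, hmem⟩, fun γ => Iff.rfl⟩
  | not ψ ih =>
      intro σ hqd hFV
      obtain ⟨B, hB⟩ := ih σ hqd hFV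
      exact ⟨fun e => ¬ B e, fun γ => not_congr (hB γ)⟩
  | or ψ χ ih1 ih2 =>
      intro σ hqd hFV
      have hqd' : ψ.qd ≤ n ∧ χ.qd ≤ n := by
        have : max ψ.qd χ.qd ≤ n := hqd
        omega
      obtain ⟨B1, hB1⟩ := ih1 σ hqd'.1
        (fun y hy => hFV y (by simp only [FOForm.FV, Finset.mem_union]; exact Or.inl hy))
      obtain ⟨B2, hB2⟩ := ih2 σ hqd'.2
        (fun y hy => hFV y (by simp only [FOForm.FV, Finset.mem_union]; exact Or.inr hy))
      exact ⟨fun e => B1 e ∨ B2 e, fun γ => or_congr (hB1 γ) (hB2 γ)⟩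
  | and ψ χ ih1 ih2 =>
      intro σ hqd hFV
      have hqd' : ψ.qd ≤ n ∧ χ.qd ≤ n := by
        have : max ψ.qd χ.qd ≤ n := hqd
        omega
      obtain ⟨B1, hB1⟩ := ih1 σ hqd'.1
        (fun y hy => hFV y (by simp only [FOForm.FV, Finset.mem_union]; exact Or.inl hy))
      obtain ⟨B2, hB2⟩ := ih2 σ hqd'.2
        (fun y hy => hFV y (by simp only [FOForm.FV, Finset.mem_union]; exact Or.inr hy))
      exact ⟨fun e => B1 e ∧ B2 e, fun γ => and_congr (hB1 γ) (hB2 γ)⟩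
  | ex x ψ ih =>
      intro σ hqd hFV
      have hqd1 : ψ.qd + 1 ≤ n := hqd
      obtain ⟨m, rfl⟩ : ∃ m, n = m + 1 := ⟨n - 1, by omega⟩
      set x₀ := freshVar W with hx₀
      set σ' : ℕ → ℕ := fun y => if y = x then x₀ else σ y with hσ'
      have hσW : ∀ y ∈ ψ.FV, y ≠ x → σ y ∈ W := by
        intro y hy hyx
        exact hFV y (by simp only [FOForm.FV, Finset.mem_erase]; exact ⟨hyx, hy⟩)
      have hg' : (fun δ : Val w => w.Sat (fun z => δ (σ' z)) ψ) ∈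
          TFset w m (insert x₀ W) := by
        refine ⟨ψ, σ', by omega, ?_, rfl⟩
        intro y hy
        by_cases hyx : y = x
        · simp [hσ', hyx]
        · simp only [hσ', if_neg hyx]
          exact Finset.mem_insert_of_mem (hσW y hy hyx)
      have hmem : exTF w x₀ (fun δ : Val w => w.Sat (fun z => δ (σ' z)) ψ) ∈
          gens A w (m+1) W := Set.mem_union_right _ ⟨_, hg', rfl⟩
      refine ⟨fun e => e ⟨_, hmem⟩, fun γ => ?_⟩
      show (∃ p : w.carrier, w.Sat (fun y => if y = x then some p else γ (σ y)) ψ) ↔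
        ∃ p : w.carrier, w.Sat (fun z => (updVal γ x₀ p) (σ' z)) ψ
      refine exists_congr fun p => sat_congrFV w ψ _ _ fun y hy => ?_
      by_cases hyx : y = x
      · simp [hσ', hyx, updVal]
      · have hW : σ y ∈ W := hσW y hy hyx
        have hne : σ y ≠ x₀ := by intro h; rw [h] at hW; exact freshVar_not_mem W hW
        simp [hσ', hyx, updVal, hne]
  | all x ψ ih =>
      intro σ hqd hFV
      have hqd1 : ψ.qd + 1 ≤ n := hqd
      obtain ⟨m, rfl⟩ : ∃ m, n = m + 1 := ⟨n - 1, by omega⟩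
      set x₀ := freshVar W with hx₀
      set σ' : ℕ → ℕ := fun y => if y = x then x₀ else σ y with hσ'
      have hσW : ∀ y ∈ ψ.FV, y ≠ x → σ y ∈ W := by
        intro y hy hyx
        exact hFV y (by simp only [FOForm.FV, Finset.mem_erase]; exact ⟨hyx, hy⟩)
      have hg' : (fun δ : Val w => w.Sat (fun z => δ (σ' z)) (.not ψ)) ∈
          TFset w m (insert x₀ W) := by
        refine ⟨.not ψ, σ', by simp only [FOForm.qd]; omega, ?_, rfl⟩
        intro y hy
        have hy' : y ∈ ψ.FV := hy
        by_cases hyx : y = x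
        · simp [hσ', hyx]
        · simp only [hσ', if_neg hyx]
          exact Finset.mem_insert_of_mem (hσW y hy' hyx)
      have hmem : exTF w x₀ (fun δ : Val w => w.Sat (fun z => δ (σ' z)) (.not ψ)) ∈
          gens A w (m+1) W := Set.mem_union_right _ ⟨_, hg', rfl⟩
      refine ⟨fun e => ¬ e ⟨_, hmem⟩, fun γ => ?_⟩
      show (∀ p : w.carrier, w.Sat (fun y => if y = x then some p else γ (σ y)) ψ) ↔
        ¬ ∃ p : w.carrier, ¬ w.Sat (fun z => (updVal γ x₀ p) (σ' z)) ψ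
      have hcongr : ∀ p : w.carrier,
          w.Sat (fun y => if y = x then some p else γ (σ y)) ψ ↔
          w.Sat (fun z => (updVal γ x₀ p) (σ' z)) ψ := by
        intro p
        refine sat_congrFV w ψ _ _ fun y hy => ?_
        by_cases hyx : y = x
        · simp [hσ', hyx, updVal]
        · have hW : σ y ∈ W := hσW y hy hyx
          have hne : σ y ≠ x₀ := by intro h; rw [h] at hW; exact freshVar_not_mem W hW
          simp [hσ', hyx, updVal, hne]
      constructor
      · rintro h ⟨p, hp⟩
        exact hp ((hcongr p).mp (h p))
      · intro h p
        by_contra hc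
        exact h ⟨p, fun hs => hc ((hcongr p).mpr hs)⟩

open Classical in
lemma tfset_step (A : Finset ℕ) (w : GWord) (hw : ∀ p : w.carrier, w.label p ∈ A)
    (n : ℕ) (W : Finset ℕ) (hg : (gens A w n W).Finite) : (TFset w n W).Finite := by
  have : Finite (gens A w n W) := hg.to_subtype
  have hsub : TFset w n W ⊆ Set.range
      (fun B : ((gens A w n W) → Prop) → Prop => (fun γ => B (fun g => g.1 γ) : Val w → Prop)) := by
    rintro f ⟨φ, σ, h1, h2, rfl⟩
    obtain ⟨B, hB⟩ := tf_boolean A w hw n W φ σ h1 h2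
    exact ⟨B, funext fun γ => (propext (hB γ)).symm⟩
  exact (Set.finite_range _).subset hsub

lemma tfset_finite (A : Finset ℕ) (w : GWord) (hw : ∀ p : w.carrier, w.label p ∈ A) :
    ∀ (n : ℕ) (W : Finset ℕ), (TFset w n W).Finite := by
  intro n
  induction n with
  | zero =>
      intro W
      exact tfset_step A w hw 0 W (atomTFs_finite A w W)
  | succ m ih =>
      intro W
      exact tfset_step A w hw (m+1) W
        ((atomTFs_finite A w W).union ((ih _).image _))

open Classical in
lemma exists_reps {ι : Type*} {X : Type*} (f : ι → X) (h : (Set.range f).Finite) :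
    ∃ s : List ι, ∀ i : ι, ∃ j ∈ s, f j = f i := by
  refine ⟨h.toFinset.attach.toList.map
    (fun x => (h.mem_toFinset.mp x.2).choose), fun i => ?_⟩
  have hmem : f i ∈ h.toFinset := h.mem_toFinset.mpr ⟨i, rfl⟩
  refine ⟨(h.mem_toFinset.mp hmem).choose, ?_, (h.mem_toFinset.mp hmem).choose_spec⟩
  simp only [List.mem_map, Finset.mem_toList, Finset.mem_attach]
  exact ⟨⟨f i, hmem⟩, by simp, rfl⟩

/-! Finite conjunctions and disjunctions. -/

def bigAnd : List FOForm → FOForm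
  | [] => .top
  | ψ :: l => .and ψ (bigAnd l)

def bigOr : List FOForm → FOForm
  | [] => .bot
  | ψ :: l => .or ψ (bigOr l)

lemma sat_bigAnd (w : GWord) (γ : Val w) :
    ∀ L : List FOForm, (w.Sat γ (bigAnd L) ↔ ∀ ψ ∈ L, w.Sat γ ψ)
  | [] => by simp [bigAnd, GWord.Sat]
  | ψ :: l => by simp [bigAnd, GWord.Sat, sat_bigAnd w γ l]

lemma sat_bigOr (w : GWord) (γ : Val w) :
    ∀ L : List FOForm, (w.Sat γ (bigOr L) ↔ ∃ ψ ∈ L, w.Sat γ ψ)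
  | [] => by simp [bigOr, GWord.Sat]
  | ψ :: l => by simp [bigOr, GWord.Sat, sat_bigOr w γ l]

lemma fv_bigAnd : ∀ (L : List FOForm), ∀ y ∈ (bigAnd L).FV, ∃ ψ ∈ L, y ∈ ψ.FV
  | [] => by simp [bigAnd, FOForm.FV]
  | ψ :: l => by
      intro y hy
      rcases Finset.mem_union.mp hy with h | h
      · exact ⟨ψ, by simp, h⟩
      · obtain ⟨χ, hχ, hyχ⟩ := fv_bigAnd l y h
        exact ⟨χ, by simp [hχ], hyχ⟩

lemma fv_bigOr : ∀ (L : List FOForm), ∀ y ∈ (bigOr L).FV, ∃ ψ ∈ L, y ∈ ψ.FV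
  | [] => by simp [bigOr, FOForm.FV]
  | ψ :: l => by
      intro y hy
      rcases Finset.mem_union.mp hy with h | h
      · exact ⟨ψ, by simp, h⟩
      · obtain ⟨χ, hχ, hyχ⟩ := fv_bigOr l y h
        exact ⟨χ, by simp [hχ], hyχ⟩

/-! Fragment-like closure properties, stable under reducts. -/

structure FragLike (G : Set FOForm) : Prop where
  top_mem : ∀ (μ : FOCtx) (φ : FOForm), μ.subst φ ∈ G → μ.subst .top ∈ G
  bot_mem : ∀ (μ : FOCtx) (φ : FOForm), μ.subst φ ∈ G → μ.subst .bot ∈ G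
  or_mem : ∀ (μ : FOCtx) (φ ψ : FOForm),
    μ.subst (.or φ ψ) ∈ G ↔ μ.subst φ ∈ G ∧ μ.subst ψ ∈ G
  and_mem : ∀ (μ : FOCtx) (φ ψ : FOForm),
    μ.subst (.and φ ψ) ∈ G ↔ μ.subst φ ∈ G ∧ μ.subst ψ ∈ G

lemma IsFragment.fragLike {F : Set FOForm} (h : IsFragment F) : FragLike F :=
  ⟨h.top_mem, h.bot_mem, h.or_mem, h.and_mem⟩

def qCtx (Q : Quant) (x : ℕ) (μ : FOCtx) : FOCtx :=
  match Q with
  | .qex => .exC x μ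
  | .qall => .allC x μ
  | .qnex => .notC (.exC x μ)
  | .qnall => .notC (.allC x μ)

lemma qCtx_subst (Q : Quant) (x : ℕ) (μ : FOCtx) (φ : FOForm) :
    (qCtx Q x μ).subst φ = Q.apply x (μ.subst φ) := by
  cases Q <;> rfl

lemma FragLike.reduct {G : Set FOForm} (h : FragLike G) (Q : Quant) (x : ℕ) :
    FragLike (reduct Q x G) := by
  refine ⟨fun μ φ hφ => ?_, fun μ φ hφ => ?_, fun μ φ ψ => ?_, fun μ φ ψ => ?_⟩
  · show Q.apply x (μ.subst .top) ∈ G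
    rw [← qCtx_subst]
    exact h.top_mem _ φ (by rw [qCtx_subst]; exact hφ)
  · show Q.apply x (μ.subst .bot) ∈ G
    rw [← qCtx_subst]
    exact h.bot_mem _ φ (by rw [qCtx_subst]; exact hφ)
  · show Q.apply x (μ.subst (.or φ ψ)) ∈ G ↔
      Q.apply x (μ.subst φ) ∈ G ∧ Q.apply x (μ.subst ψ) ∈ G
    rw [← qCtx_subst, ← qCtx_subst, ← qCtx_subst]
    exact h.or_mem _ φ ψ
  · show Q.apply x (μ.subst (.and φ ψ)) ∈ G ↔
      Q.apply x (μ.subst φ) ∈ G ∧ Q.apply x (μ.subst ψ) ∈ G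
    rw [← qCtx_subst, ← qCtx_subst, ← qCtx_subst]
    exact h.and_mem _ φ ψ

lemma FragLike.top_mem' {G : Set FOForm} (h : FragLike G) (hne : G.Nonempty) :
    FOForm.top ∈ G := by
  obtain ⟨φ, hφ⟩ := hne
  exact h.top_mem .hole φ hφ

lemma FragLike.bot_mem' {G : Set FOForm} (h : FragLike G) (hne : G.Nonempty) :
    FOForm.bot ∈ G := by
  obtain ⟨φ, hφ⟩ := hne
  exact h.bot_mem .hole φ hφ

lemma bigAnd_mem {G : Set FOForm} (h : FragLike G) (hne : G.Nonempty) :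
    ∀ L : List FOForm, (∀ ψ ∈ L, ψ ∈ G) → bigAnd L ∈ G
  | [] => fun _ => h.top_mem' hne
  | ψ :: l => fun hL =>
      (h.and_mem .hole ψ (bigAnd l)).mpr
        ⟨hL ψ (by simp), bigAnd_mem h hne l fun χ hχ => hL χ (by simp [hχ])⟩

lemma bigOr_mem {G : Set FOForm} (h : FragLike G) (hne : G.Nonempty) :
    ∀ L : List FOForm, (∀ ψ ∈ L, ψ ∈ G) → bigOr L ∈ G
  | [] => fun _ => h.bot_mem' hne
  | ψ :: l => fun hL =>
      (h.or_mem .hole ψ (bigOr l)).mpr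
        ⟨hL ψ (by simp), bigOr_mem h hne l fun χ hχ => hL χ (by simp [hχ])⟩

open Classical in
/-- Core step lemma for existential-type moves: quest in the first word, reply in the
second; the second word's formula classes are combined by a conjunction. -/
lemma ex_step {A : Finset ℕ} {u v : GWord} (hv : ∀ p : v.carrier, v.label p ∈ A)
    {K : Set FOForm} (hK : FragLike K) {n : ℕ} (hbd : ∀ φ ∈ K, φ.qd ≤ n)
    (hne : K.Nonempty) {V : Finset ℕ} {x : ℕ} {α : Val u} {β : Val v} (q : u.carrier)
    (himp : ∀ Ψ ∈ K, Ψ.FV.erase x ⊆ V →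
      (∃ p, u.Sat (updVal α x p) Ψ) → ∃ p, v.Sat (updVal β x p) Ψ) :
    ∃ r : v.carrier, ∀ φ ∈ K, φ.FV ⊆ insert x V →
      u.Sat (updVal α x q) φ → v.Sat (updVal β x r) φ := by
  by_contra hcon
  push_neg at hcon
  choose φf hf1 hf2 hf3 hf4 using hcon
  have hrange : (Set.range fun r => (fun γ => v.Sat γ (φf r) : Val v → Prop)).Finite := by
    refine (tfset_finite A v hv n (insert x V)).subset ?_
    rintro f ⟨r, rfl⟩
    exact ⟨φf r, id, hbd _ (hf1 r), fun y hy => hf2 r hy, rfl⟩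
  obtain ⟨s, hs⟩ := exists_reps _ hrange
  set L := s.map φf with hL
  have hΨK : bigAnd L ∈ K := by
    refine bigAnd_mem hK hne L ?_
    rintro ψ hψ
    obtain ⟨j, hj, rfl⟩ := List.mem_map.mp hψ
    exact hf1 j
  have hFV : (bigAnd L).FV.erase x ⊆ V := by
    intro y hy
    rw [Finset.mem_erase] at hy
    obtain ⟨ψ, hψ, hyψ⟩ := fv_bigAnd L y hy.2
    obtain ⟨j, hj, rfl⟩ := List.mem_map.mp hψ
    have h2 := hf2 j hyψ
    rcases Finset.mem_insert.mp h2 with h | h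
    · exact absurd h hy.1
    · exact h
  have hsatu : ∃ p, u.Sat (updVal α x p) (bigAnd L) := by
    refine ⟨q, (sat_bigAnd u _ L).mpr ?_⟩
    rintro ψ hψ
    obtain ⟨j, hj, rfl⟩ := List.mem_map.mp hψ
    exact hf3 j
  obtain ⟨r', hr'⟩ := himp _ hΨK hFV hsatu
  obtain ⟨j, hj, hje⟩ := hs r'
  have hsatj : v.Sat (updVal β x r') (φf j) :=
    (sat_bigAnd v _ L).mp hr' (φf j) (List.mem_map_of_mem hj)
  have : v.Sat (updVal β x r') (φf r') := (congrFun hje (updVal β x r')) ▸ hsatj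
  exact hf4 r' this

open Classical in
/-- Core step lemma for universal-type moves: quest in the second word, reply in the
first; the first word's formula classes are combined by a disjunction. -/
lemma all_step {A : Finset ℕ} {u v : GWord} (hu : ∀ p : u.carrier, u.label p ∈ A)
    {K : Set FOForm} (hK : FragLike K) {n : ℕ} (hbd : ∀ φ ∈ K, φ.qd ≤ n)
    (hne : K.Nonempty) {V : Finset ℕ} {x : ℕ} {α : Val u} {β : Val v} (q : v.carrier)
    (himp : ∀ Ψ ∈ K, Ψ.FV.erase x ⊆ V →
      (∀ p, u.Sat (updVal α x p) Ψ) → ∀ p, v.Sat (updVal β x p) Ψ) :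
    ∃ r : u.carrier, ∀ φ ∈ K, φ.FV ⊆ insert x V →
      u.Sat (updVal α x r) φ → v.Sat (updVal β x q) φ := by
  by_contra hcon
  push_neg at hcon
  choose φf hf1 hf2 hf3 hf4 using hcon
  have hrange : (Set.range fun r => (fun γ => u.Sat γ (φf r) : Val u → Prop)).Finite := by
    refine (tfset_finite A u hu n (insert x V)).subset ?_
    rintro f ⟨r, rfl⟩
    exact ⟨φf r, id, hbd _ (hf1 r), fun y hy => hf2 r hy, rfl⟩
  obtain ⟨s, hs⟩ := exists_reps _ hrange
  set L := s.map φf with hL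
  have hΨK : bigOr L ∈ K := by
    refine bigOr_mem hK hne L ?_
    rintro ψ hψ
    obtain ⟨j, hj, rfl⟩ := List.mem_map.mp hψ
    exact hf1 j
  have hFV : (bigOr L).FV.erase x ⊆ V := by
    intro y hy
    rw [Finset.mem_erase] at hy
    obtain ⟨ψ, hψ, hyψ⟩ := fv_bigOr L y hy.2
    obtain ⟨j, hj, rfl⟩ := List.mem_map.mp hψ
    have h2 := hf2 j hyψ
    rcases Finset.mem_insert.mp h2 with h | h
    · exact absurd h hy.1
    · exact h
  have hsatu : ∀ p, u.Sat (updVal α x p) (bigOr L) := by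
    intro p
    obtain ⟨j, hj, hje⟩ := hs p
    refine (sat_bigOr u _ L).mpr ⟨φf j, List.mem_map_of_mem hj, ?_⟩
    exact (congrFun hje (updVal α x p)).symm ▸ hf3 p
  have hsatv := himp _ hΨK hFV hsatu q
  obtain ⟨ψ, hψ, hsψ⟩ := (sat_bigOr v _ L).mp hsatv
  obtain ⟨j, hj, rfl⟩ := List.mem_map.mp hψ
  exact hf4 j hsψ

/-- The safe invariant: configurations whose fragment has the needed closure properties
and bounded quantifier depth, whose words are labeled over `A`, and whose valuations have
a common finite domain on which the first valuation implies the second. -/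
def GoodCfg (A : Finset ℕ) : Set Config :=
  {D | FragLike D.frag ∧ (∃ n, QDBoundedBy D.frag n) ∧
       (∀ p, D.w1.label p ∈ A) ∧ (∀ p, D.w2.label p ∈ A) ∧
       ∃ V : Finset ℕ, ValDom D.val1 V ∧ ValDom D.val2 V ∧
         ∀ φ ∈ D.frag, φ.FV ⊆ V → D.w1.Sat D.val1 φ → D.w2.Sat D.val2 φ}

lemma valDom_upd {w : GWord} {α : Val w} {V : Finset ℕ} (h : ValDom α V) (x : ℕ)
    (p : w.carrier) : ValDom (updVal α x p) (insert x V) := by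
  intro y
  by_cases hy : y = x <;> simp [updVal, hy, h y]

lemma qd_reduct {G : Set FOForm} {n : ℕ} (h : QDBoundedBy G n) (Q : Quant) (x : ℕ) :
    QDBoundedBy (reduct Q x G) n := by
  intro φ hφ
  have h1 : (Q.apply x φ).qd ≤ n := h _ hφ
  have h2 : (Q.apply x φ).qd = φ.qd + 1 := by cases Q <;> rfl
  omega

open Classical in
lemma goodCfg_safe (A : Finset ℕ) : SafeInv (GoodCfg A) := by
  rintro ⟨G, u, v, α, β⟩ ⟨hFL, ⟨n, hbd⟩, hu, hv, V, hα, hβ, himp⟩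
  refine ⟨?_, ?_, ?_, ?_, ?_⟩
  · rintro ⟨φ, hφG, -, hdom, hsat1, hsat2⟩
    exact hsat2 (himp φ hφG (fun y hy => (hα y).mp (hdom y hy)) hsat1)
  · -- qex
    intro x hne q
    have hKfl : FragLike (reduct .qex x G) := hFL.reduct _ _
    obtain ⟨r, hr⟩ := ex_step (A := A) (u := u) (v := v) hv hKfl
      (qd_reduct hbd .qex x) hne (V := V) (x := x) (α := α) (β := β) q
      (fun Ψ hΨ hFV hex => by
        have h1 : FOForm.ex x Ψ ∈ G := hΨ
        exact himp _ h1 hFV hex)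
    exact ⟨r, hKfl, ⟨n, qd_reduct hbd _ _⟩, hu, hv, insert x V,
      valDom_upd hα x q, valDom_upd hβ x r, hr⟩
  · -- qall
    intro x hne q
    have hKfl : FragLike (reduct .qall x G) := hFL.reduct _ _
    obtain ⟨r, hr⟩ := all_step (A := A) (u := u) (v := v) hu hKfl
      (qd_reduct hbd .qall x) hne (V := V) (x := x) (α := α) (β := β) q
      (fun Ψ hΨ hFV hall => by
        have h1 : FOForm.all x Ψ ∈ G := hΨ
        exact himp _ h1 hFV hall)
    exact ⟨r, hKfl, ⟨n, qd_reduct hbd _ _⟩, hu, hv, insert x V,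
      valDom_upd hα x r, valDom_upd hβ x q, hr⟩
  · -- qnex : words are swapped; quest in v, reply in u
    intro x hne q
    have hKfl : FragLike (reduct .qnex x G) := hFL.reduct _ _
    obtain ⟨r, hr⟩ := ex_step (A := A) (u := v) (v := u) hu hKfl
      (qd_reduct hbd .qnex x) hne (V := V) (x := x) (α := β) (β := α) q
      (fun Ψ hΨ hFV hex => by
        have h1 : FOForm.not (.ex x Ψ) ∈ G := hΨ
        have h2 : u.Sat α (.not (.ex x Ψ)) → v.Sat β (.not (.ex x Ψ)) :=
          himp _ h1 hFV
        have h3 : ¬ v.Sat β (.not (.ex x Ψ)) := fun hc => hc hex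
        have h4 : ¬ ¬ u.Sat α (.ex x Ψ) := fun hc => h3 (h2 hc)
        exact not_not.mp h4)
    exact ⟨r, hKfl, ⟨n, qd_reduct hbd _ _⟩, hv, hu, insert x V,
      valDom_upd hβ x q, valDom_upd hα x r, hr⟩
  · -- qnall : words are swapped; quest in u, reply in v
    intro x hne q
    have hKfl : FragLike (reduct .qnall x G) := hFL.reduct _ _
    obtain ⟨r, hr⟩ := all_step (A := A) (u := v) (v := u) hv hKfl
      (qd_reduct hbd .qnall x) hne (V := V) (x := x) (α := β) (β := α) q
      (fun Ψ hΨ hFV hall => by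
        have h1 : FOForm.not (.all x Ψ) ∈ G := hΨ
        have h2 : u.Sat α (.not (.all x Ψ)) → v.Sat β (.not (.all x Ψ)) :=
          himp _ h1 hFV
        have h3 : ¬ v.Sat β (.not (.all x Ψ)) := fun hc => hc hall
        exact not_not.mp (fun hc => h3 (h2 hc)))
    exact ⟨r, hKfl, ⟨n, qd_reduct hbd _ _⟩, hv, hu, insert x V,
      valDom_upd hβ x r, valDom_upd hα x q, hr⟩
/-- Proposition: Duplicator wins: over a fixed finite alphabet `A`,
for a fragment of bounded quantifier depth, if every `φ ∈ F` with `FV(φ) ⊆ V` true in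
`⟨u, α⟩` is also true in `⟨v, β⟩`, then Duplicator has a winning strategy in the
configuration `(F, ⟨u, α⟩, ⟨v, β⟩)`. -/
theorem statement_13 (F : Set FOForm) (hF : IsFragment F)
    (hbd : ∃ n : ℕ, QDBoundedBy F n) (A : Finset ℕ) (u v : GWord)
    (hu : ∀ p : u.carrier, u.label p ∈ A) (hv : ∀ p : v.carrier, v.label p ∈ A)
    (V : Finset ℕ) (α : ℕ → Option u.carrier) (β : ℕ → Option v.carrier)
    (hα : ValDom α V) (hβ : ValDom β V)
    (himp : ∀ φ ∈ F, φ.FV ⊆ V → u.Sat α φ → v.Sat β φ) :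
    DuplicatorWins ⟨F, u, v, α, β⟩ :=
  ⟨GoodCfg A, ⟨hF.fragLike, hbd, hu, hv, V, hα, hβ, himp⟩, goodCfg_safe A⟩

end EFGames
end

section
/- For every fragment F, the relation ⊴_F (defined on valuations by ⟨u,α⟩ ⊴_F ⟨v,β⟩ iff Duplicator has a winning strategy in the configuration (F, ⟨u,α⟩, ⟨v,β⟩)) is transitive: if ⟨u,α⟩ ⊴_F ⟨v,β⟩ and ⟨v,β⟩ ⊴_F ⟨w,γ⟩ for V-valuations ⟨u,α⟩, ⟨v,β⟩, ⟨w,γ⟩, then ⟨u,α⟩ ⊴_F ⟨w,γ⟩. -/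
set_option autoImplicit false

namespace EFGames

/-- Composition of two sets of configurations through a middle word, with domain
tracking. -/
def Comp (A B : Set Config) : Set Config :=
  {C | ∃ (m : GWord) (δ : ℕ → Option m.carrier),
    (⟨C.frag, C.w1, m, C.val1, δ⟩ : Config) ∈ A ∧
    (⟨C.frag, m, C.w2, δ, C.val2⟩ : Config) ∈ B ∧
    (∀ y : ℕ, (C.val1 y).isSome ↔ (δ y).isSome) ∧
    (∀ y : ℕ, (δ y).isSome ↔ (C.val2 y).isSome)}

lemma upd_dom {u v : GWord} (α : ℕ → Option u.carrier) (δ : ℕ → Option v.carrier)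
    (x : ℕ) (p : u.carrier) (q : v.carrier)
    (h : ∀ y : ℕ, (α y).isSome ↔ (δ y).isSome) :
    ∀ y : ℕ, (updVal α x p y).isSome ↔ (updVal δ x q y).isSome := by
  intro y
  unfold updVal
  by_cases hy : y = x <;> simp [hy, h y]

lemma comp_key {A B : Set Config} (hA : SafeInv A) (hB : SafeInv B) :
    ∀ D ∈ Comp A B,
    (¬ SpoilerWinsNow D) ∧
    (∀ x : ℕ, (reduct .qex x D.frag).Nonempty →
      ∀ q : D.w1.carrier, ∃ r : D.w2.carrier,
        (⟨reduct .qex x D.frag, D.w1, D.w2, updVal D.val1 x q, updVal D.val2 x r⟩ : Config)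
          ∈ Comp A B ∪ Comp B A) ∧
    (∀ x : ℕ, (reduct .qall x D.frag).Nonempty →
      ∀ q : D.w2.carrier, ∃ r : D.w1.carrier,
        (⟨reduct .qall x D.frag, D.w1, D.w2, updVal D.val1 x r, updVal D.val2 x q⟩ : Config)
          ∈ Comp A B ∪ Comp B A) ∧
    (∀ x : ℕ, (reduct .qnex x D.frag).Nonempty →
      ∀ q : D.w2.carrier, ∃ r : D.w1.carrier,
        (⟨reduct .qnex x D.frag, D.w2, D.w1, updVal D.val2 x q, updVal D.val1 x r⟩ : Config)
          ∈ Comp A B ∪ Comp B A) ∧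
    (∀ x : ℕ, (reduct .qnall x D.frag).Nonempty →
      ∀ q : D.w1.carrier, ∃ r : D.w2.carrier,
        (⟨reduct .qnall x D.frag, D.w2, D.w1, updVal D.val2 x r, updVal D.val1 x q⟩ : Config)
          ∈ Comp A B ∪ Comp B A) := by
  rintro D ⟨m, δ, h1, h2, hd1, hd2⟩
  obtain ⟨hns1, hex1, hall1, hnex1, hnall1⟩ := hA _ h1
  obtain ⟨hns2, hex2, hall2, hnex2, hnall2⟩ := hB _ h2
  refine ⟨?_, ?_, ?_, ?_, ?_⟩
  · rintro ⟨φ, hφF, hlit, hfv, hs1, hs2⟩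
    by_cases hm : m.Sat δ φ
    · exact hns2 ⟨φ, hφF, hlit, fun y hy => (hd1 y).mp (hfv y hy), hm, hs2⟩
    · exact hns1 ⟨φ, hφF, hlit, hfv, hs1, hm⟩
  · intro x hne q
    obtain ⟨r1, hr1⟩ := hex1 x hne q
    obtain ⟨r, hr⟩ := hex2 x hne r1
    exact ⟨r, Or.inl ⟨m, updVal δ x r1, hr1, hr,
      upd_dom _ _ _ _ _ hd1, upd_dom _ _ _ _ _ hd2⟩⟩
  · intro x hne q
    obtain ⟨r1, hr1⟩ := hall2 x hne q
    obtain ⟨r, hr⟩ := hall1 x hne r1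
    exact ⟨r, Or.inl ⟨m, updVal δ x r1, hr, hr1,
      upd_dom _ _ _ _ _ hd1, upd_dom _ _ _ _ _ hd2⟩⟩
  · intro x hne q
    obtain ⟨r1, hr1⟩ := hnex2 x hne q
    obtain ⟨r, hr⟩ := hnex1 x hne r1
    exact ⟨r, Or.inr ⟨m, updVal δ x r1, hr1, hr,
      upd_dom _ _ _ _ _ (fun y => (hd2 y).symm),
      upd_dom _ _ _ _ _ (fun y => (hd1 y).symm)⟩⟩
  · intro x hne q
    obtain ⟨r1, hr1⟩ := hnall1 x hne q
    obtain ⟨r, hr⟩ := hnall2 x hne r1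
    exact ⟨r, Or.inr ⟨m, updVal δ x r1, hr, hr1,
      upd_dom _ _ _ _ _ (fun y => (hd2 y).symm),
      upd_dom _ _ _ _ _ (fun y => (hd1 y).symm)⟩⟩

lemma safeInv_comp {A B : Set Config} (hA : SafeInv A) (hB : SafeInv B) :
    SafeInv (Comp A B ∪ Comp B A) := by
  intro D hD
  rcases hD with h | h
  · exact comp_key hA hB D h
  · have := comp_key hB hA D h
    rwa [Set.union_comm] at this

/-- Proposition: transitivity: the relation "Duplicator has a winning
strategy in the configuration `(F, ·, ·)`" is transitive on `V`-valuations. -/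
theorem statement_14 (F : Set FOForm) (hF : IsFragment F) (V : Finset ℕ)
    (u v w : GWord) (α : ℕ → Option u.carrier) (β : ℕ → Option v.carrier)
    (γ : ℕ → Option w.carrier) (hα : ValDom α V) (hβ : ValDom β V) (hγ : ValDom γ V)
    (h1 : DuplicatorWins ⟨F, u, v, α, β⟩) (h2 : DuplicatorWins ⟨F, v, w, β, γ⟩) :
    DuplicatorWins ⟨F, u, w, α, γ⟩ := by
  obtain ⟨G1, hC1, hS1⟩ := h1
  obtain ⟨G2, hC2, hS2⟩ := h2
  refine ⟨Comp G1 G2 ∪ Comp G2 G1, Or.inl ⟨v, β, hC1, hC2,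
    fun y => (hα y).trans (hβ y).symm, fun y => (hβ y).trans (hγ y).symm⟩,
    safeInv_comp hS1 hS2⟩

end EFGames
end

section
/- Let F be a fragment, ⟨u,α⟩ and ⟨v,β⟩ V-valuations, V' ⊆ V, and let ⟨u,α'⟩, ⟨v,β'⟩ be the restrictions of the valuations to V'. If Duplicator has a winning strategy in the configuration (F, ⟨u,α⟩, ⟨v,β⟩), then Duplicator has a winning strategy in the configuration (F, ⟨u,α'⟩, ⟨v,β'⟩). -/
set_option autoImplicit false

namespace EFGames

/-- Satisfaction only depends on the values of the free variables. -/
lemma sat_congr (u : GWord) (φ : FOForm) : ∀ (α α' : ℕ → Option u.carrier),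
    (∀ y ∈ φ.FV, α y = α' y) → (u.Sat α φ ↔ u.Sat α' φ) := by
  induction φ with
  | top => intro _ _ _; exact Iff.rfl
  | bot => intro _ _ _; exact Iff.rfl
  | empt => intro _ _ _; exact Iff.rfl
  | eq x y =>
    intro α α' h
    simp only [GWord.Sat]
    rw [h x (by simp [FOForm.FV]), h y (by simp [FOForm.FV])]
  | lab x a =>
    intro α α' h
    simp only [GWord.Sat]
    rw [h x (by simp [FOForm.FV])]
  | lt x y =>
    intro α α' h
    simp only [GWord.Sat]
    rw [h x (by simp [FOForm.FV]), h y (by simp [FOForm.FV])]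
  | le x y =>
    intro α α' h
    simp only [GWord.Sat]
    rw [h x (by simp [FOForm.FV]), h y (by simp [FOForm.FV])]
  | suc x y =>
    intro α α' h
    simp only [GWord.Sat]
    rw [h x (by simp [FOForm.FV]), h y (by simp [FOForm.FV])]
  | fmin x =>
    intro α α' h
    simp only [GWord.Sat]
    rw [h x (by simp [FOForm.FV])]
  | fmax x =>
    intro α α' h
    simp only [GWord.Sat]
    rw [h x (by simp [FOForm.FV])]
  | not φ ih =>
    intro α α' h
    simp only [GWord.Sat]
    rw [ih α α' h]
  | or φ ψ ihφ ihψ =>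
    intro α α' h
    simp only [GWord.Sat]
    rw [ihφ α α' fun y hy => h y (by simp [FOForm.FV, hy]),
        ihψ α α' fun y hy => h y (by simp [FOForm.FV, hy])]
  | and φ ψ ihφ ihψ =>
    intro α α' h
    simp only [GWord.Sat]
    rw [ihφ α α' fun y hy => h y (by simp [FOForm.FV, hy]),
        ihψ α α' fun y hy => h y (by simp [FOForm.FV, hy])]
  | ex x φ ih =>
    intro α α' h
    simp only [GWord.Sat]
    refine exists_congr fun p => ih _ _ fun y hy => ?_
    by_cases hyx : y = x
    · simp [hyx]
    · simpa [hyx] using h y (by simp [FOForm.FV, Finset.mem_erase, hyx, hy])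
  | all x φ ih =>
    intro α α' h
    simp only [GWord.Sat]
    refine forall_congr' fun p => ih _ _ fun y hy => ?_
    by_cases hyx : y = x
    · simp [hyx]
    · simpa [hyx] using h y (by simp [FOForm.FV, Finset.mem_erase, hyx, hy])

open Classical in
/-- Restricting both valuations of a configuration to a set of variables. -/
noncomputable def restrictC (S : Set ℕ) (D : Config) : Config :=
  ⟨D.frag, D.w1, D.w2,
   fun x => if x ∈ S then D.val1 x else none,
   fun x => if x ∈ S then D.val2 x else none⟩

open Classical in
lemma restrict_upd {u : GWord} (S : Set ℕ) (α : ℕ → Option u.carrier) (x : ℕ)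
    (p : u.carrier) :
    updVal (fun y => if y ∈ S then α y else none) x p
      = fun y => if y ∈ insert x S then updVal α x p y else none := by
  funext y
  by_cases h : y = x <;> simp [updVal, h]

/-- Lemma: discarding variables: restricting both valuations of a
configuration won by Duplicator to a subset `V' ⊆ V` again yields a configuration won
by Duplicator. -/
theorem statement_15 (F : Set FOForm) (hF : IsFragment F) (V V' : Finset ℕ)
    (hVV : V' ⊆ V) (u v : GWord) (α : ℕ → Option u.carrier) (β : ℕ → Option v.carrier)
    (hα : ValDom α V) (hβ : ValDom β V)
    (h : DuplicatorWins ⟨F, u, v, α, β⟩) :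
    DuplicatorWins ⟨F, u, v, fun x => if x ∈ V' then α x else none,
      fun x => if x ∈ V' then β x else none⟩ := by
  obtain ⟨Good, hmem, hsafe⟩ := h
  refine ⟨{C | ∃ D ∈ Good, ∃ S : Set ℕ, C = restrictC S D}, ?_, ?_⟩
  · refine ⟨_, hmem, (↑V' : Set ℕ), ?_⟩
    simp only [restrictC]
    congr 1 <;> funext x <;> by_cases hx : x ∈ V' <;> simp [hx]
  · rintro C ⟨D, hD, S, rfl⟩
    obtain ⟨hnw, hex, hall, hnex, hnall⟩ := hsafe D hD
    refine ⟨?_, ?_, ?_, ?_, ?_⟩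
    · rintro ⟨φ, hφ, hlit, hdom, hs1, hs2⟩
      have hSV : ∀ y ∈ φ.FV, y ∈ S ∧ (D.val1 y).isSome := by
        intro y hy
        have hd := hdom y hy
        simp only [restrictC] at hd
        by_cases hyS : y ∈ S
        · exact ⟨hyS, by simpa [hyS] using hd⟩
        · simp [hyS] at hd
      apply hnw
      refine ⟨φ, hφ, hlit, fun y hy => (hSV y hy).2, ?_, ?_⟩
      · exact (sat_congr D.w1 φ _ D.val1
          (fun y hy => by simp [restrictC, (hSV y hy).1])).mp hs1
      · intro hc
        exact hs2 ((sat_congr D.w2 φ _ D.val2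
          (fun y hy => by simp [restrictC, (hSV y hy).1])).mpr hc)
    · intro x hne q
      obtain ⟨r, hr⟩ := hex x hne q
      refine ⟨r, _, hr, insert x S, ?_⟩
      simp only [restrictC]
      congr 1 <;> funext y <;> by_cases hyx : y = x <;> by_cases hyS : y ∈ S <;>
        simp [updVal, hyx, hyS]
    · intro x hne q
      obtain ⟨r, hr⟩ := hall x hne q
      refine ⟨r, _, hr, insert x S, ?_⟩
      simp only [restrictC]
      congr 1 <;> funext y <;> by_cases hyx : y = x <;> by_cases hyS : y ∈ S <;>
        simp [updVal, hyx, hyS]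
    · intro x hne q
      obtain ⟨r, hr⟩ := hnex x hne q
      refine ⟨r, _, hr, insert x S, ?_⟩
      simp only [restrictC]
      congr 1 <;> funext y <;> by_cases hyx : y = x <;> by_cases hyS : y ∈ S <;>
        simp [updVal, hyx, hyS]
    · intro x hne q
      obtain ⟨r, hr⟩ := hnall x hne q
      refine ⟨r, _, hr, insert x S, ?_⟩
      simp only [restrictC]
      congr 1 <;> funext y <;> by_cases hyx : y = x <;> by_cases hyS : y ∈ S <;>
        simp [updVal, hyx, hyS]

end EFGames
end
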